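/- arXiv:2009.01951 — 4 statements merged into one kernel-verified Lean document; each statement's English description precedes it below -/
import Mathlib

section
/- Let f be a bounded holomorphic function on the right half-plane H₊ = {z ∈ ℂ : Re z > 0}. If the set E = {k ∈ ℕ, k ≥ 1 : f(k) = 0} satisfies ∑_{k ∈ E} 1/k = ∞, then f vanishes identically on H₊. -/
open Complex ENNReal
open scoped ENNReal
open Filter Set Finset
open scoped Topology






/-- Lemma A: factor out finitely many zeros as Blaschke factors. -/
lemma factor_out (f : ℂ → ℂ) (hdiff : DifferentiableOn ℂ f {z : ℂ | 0 < z.re})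
    (S : Finset ℕ) (hS : ∀ k ∈ S, 0 < k ∧ f (k : ℂ) = 0) :
    ∃ G : ℂ → ℂ, DifferentiableOn ℂ G {z : ℂ | 0 < z.re} ∧
      ∀ z ∈ {z : ℂ | 0 < z.re}, f z = (∏ k ∈ S, ((z - k) / (z + k))) * G z := by
  classical
  induction S using Finset.induction_on with
  | empty => exact ⟨f, hdiff, fun z _ => by simp⟩
  | @insert a S ha ih =>
      obtain ⟨G, hG, hfact⟩ := ih (fun k hk => hS k (Finset.mem_insert_of_mem hk))
      have hapos : 0 < a := (hS a (Finset.mem_insert_self a S)).1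
      have haU : (a : ℂ) ∈ {z : ℂ | 0 < z.re} := by
        simp [Set.mem_setOf_eq, hapos]
      have hGa : G a = 0 := by
        have h0 := hfact a haU
        rw [(hS a (Finset.mem_insert_self a S)).2] at h0
        have hne : (∏ k ∈ S, (((a : ℂ) - k) / ((a : ℂ) + k))) ≠ 0 := by
          apply Finset.prod_ne_zero_iff.2
          intro k hk
          have hk1 : k ≠ a := fun h => ha (h ▸ hk)
          have h1 : ((a : ℂ) - k) ≠ 0 := by
            intro h
            exact hk1 (Nat.cast_injective (sub_eq_zero.1 h)).symm
          have h2 : ((a : ℂ) + k) ≠ 0 := by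
            rw [← Nat.cast_add]
            exact_mod_cast (Nat.add_pos_left hapos k).ne' 
          exact div_ne_zero h1 h2
        have := (mul_eq_zero.1 h0.symm).resolve_left hne
        exact this
      -- dslope of G at a is differentiable on U
      have hdG : DifferentiableOn ℂ (dslope G a) {z : ℂ | 0 < z.re} := by
        intro z hz
        rcases eq_or_ne z a with rfl | hne
        · have hopen : IsOpen {z : ℂ | 0 < z.re} := by
            simpa using isOpen_lt continuous_const Complex.continuous_re
          have hA : AnalyticAt ℂ G (a : ℂ) := hG.analyticAt (hopen.mem_nhds haU)
          obtain ⟨p, hp⟩ := hA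
          exact ((hp.has_fpower_series_dslope_fslope).analyticAt).differentiableAt.differentiableWithinAt
        · exact (differentiableWithinAt_dslope_of_ne hne).2 (hG z hz)
      refine ⟨fun z => (z + a) * dslope G a z, ?_, ?_⟩
      · exact (differentiableOn_id.add_const _).mul hdG
      · intro z hz
        have hza : (z + a) ≠ 0 := by
          intro h
          have h1 : (z + (a:ℂ)).re = 0 := by rw [h]; simp
          have hzre : (0:ℝ) < z.re := hz
          have hanneg : (0:ℝ) ≤ (a:ℝ) := Nat.cast_nonneg a
          simp [Complex.add_re] at h1
          linarith
        have hds : (z - a) * dslope G a z = G z := by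
          have := sub_smul_dslope G a z
          rw [hGa, sub_zero] at this
          simpa [smul_eq_mul] using this
        rw [Finset.prod_insert ha, hfact z hz, ← hds]
        have hc : (z - (a:ℂ)) / (z + a) * (z + a) = z - a := div_mul_cancel₀ _ hza
        rw [show (z - (a:ℂ)) / (z + a) * (∏ k ∈ S, (z - (k:ℂ)) / (z + k)) * ((z + a) * dslope G (↑a) z)
              = ((z - (a:ℂ)) / (z + a) * (z + a)) * ((∏ k ∈ S, (z - (k:ℂ)) / (z + k)) * dslope G (↑a) z) from by ring,
           hc]
        ring




/-- Lemma B: lower bound for Blaschke factor on the line re = δ. -/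
lemma blaschke_lower_axis (k : ℕ) (hk : 1 ≤ k) {δ : ℝ} (hδ0 : 0 < δ) (hδ1 : δ < 1) (y : ℝ) :
    ((k:ℝ) - δ) / ((k:ℝ) + δ) ≤ ‖(((δ:ℂ) + y*I) - k) / (((δ:ℂ) + y*I) + k)‖ := by
  have hk1 : (1:ℝ) ≤ (k:ℝ) := by exact_mod_cast hk
  have h1 : ‖((δ:ℂ) + y*I) - k‖ = Real.sqrt ((δ - k)^2 + y^2) := by
    rw [Complex.norm_def, Complex.normSq_apply]
    congr 1 <;> simp <;> ring
  have h2 : ‖((δ:ℂ) + y*I) + k‖ = Real.sqrt ((δ + k)^2 + y^2) := by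
    rw [Complex.norm_def, Complex.normSq_apply]
    congr 1 <;> simp <;> ring
  rw [norm_div, h1, h2]
  have hD : (0:ℝ) < (δ + k)^2 + y^2 := by positivity
  have key : ((k:ℝ) - δ)^2 / ((k:ℝ) + δ)^2 ≤ ((δ - k)^2 + y^2) / ((δ + k)^2 + y^2) := by
    rw [div_le_div_iff₀ (by positivity) hD]
    nlinarith [sq_nonneg y, mul_nonneg (mul_nonneg hδ0.le (le_trans zero_le_one hk1)) (sq_nonneg y)]
  calc ((k:ℝ) - δ) / ((k:ℝ) + δ)
      = Real.sqrt (((k:ℝ) - δ)^2 / ((k:ℝ) + δ)^2) := by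
        rw [Real.sqrt_div (by positivity), Real.sqrt_sq (by linarith), Real.sqrt_sq (by positivity)]
    _ ≤ Real.sqrt ((δ - k)^2 + y^2) / Real.sqrt ((δ + k)^2 + y^2) := by
        rw [← Real.sqrt_div (by positivity)]
        exact Real.sqrt_le_sqrt key

/-- Lemma C: Blaschke factor is at least 1/3 far away. -/
lemma blaschke_lower_far (k : ℕ) (hk : 1 ≤ k) {z : ℂ} (hz : 2*(k:ℝ) ≤ ‖z‖) :
    (1/3 : ℝ) ≤ ‖(z - k)/(z + k)‖ := by
  have hkr : (1:ℝ) ≤ (k:ℝ) := by exact_mod_cast hk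
  have habsk : ‖(k:ℂ)‖ = (k:ℝ) := by simp
  have h1 : ‖z‖ - (k:ℝ) ≤ ‖z - k‖ := by
    have := norm_sub_norm_le z ((k:ℂ))
    simpa using this
  have h2 : ‖z + k‖ ≤ ‖z‖ + (k:ℝ) := by
    have := norm_add_le z ((k:ℂ))
    simpa using this
  have hzpos : (0:ℝ) < ‖z‖ := by linarith
  have hzk : (0:ℝ) < ‖z + k‖ := by
    have h3 : ‖z‖ ≤ ‖z + k‖ + (k:ℝ) := by
      have := norm_sub_le (z + (k:ℂ)) ((k:ℂ))
      simp only [add_sub_cancel_right] at this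
      simpa using this
    linarith
  rw [norm_div, le_div_iff₀ hzk]
  nlinarith

/-- Lemma D: smallness of the Blaschke factor at a fixed point for large k. -/
lemma blaschke_small (k : ℕ) {z : ℂ} (hx : 0 < z.re) (hkx : z.re ≤ (k:ℝ))
    (hky : |z.im| ≤ (k:ℝ)) :
    ‖(z - k)/(z + k)‖ ≤ Real.exp (-(2*z.re/5) / k) := by
  set x := z.re with hxdef
  set y := z.im with hydef
  have hkpos : (0:ℝ) < (k:ℝ) := lt_of_lt_of_le hx hkx
  have hy2 : y^2 ≤ (k:ℝ)^2 := by nlinarith [_root_.abs_nonneg y, _root_.sq_abs y]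
  have h1 : ‖z - k‖ = Real.sqrt ((x - k)^2 + y^2) := by
    rw [Complex.norm_def, Complex.normSq_apply]
    congr 1 <;> simp [hxdef, hydef] <;> ring
  have h2 : ‖z + k‖ = Real.sqrt ((x + k)^2 + y^2) := by
    rw [Complex.norm_def, Complex.normSq_apply]
    congr 1 <;> simp [hxdef, hydef] <;> ring
  have hD : (0:ℝ) < (x + k)^2 + y^2 := by positivity
  have key : ((x - k)^2 + y^2) / ((x + k)^2 + y^2) ≤ Real.exp (-(4*x/5) / k) := by
    have hstep : ((x - k)^2 + y^2) / ((x + k)^2 + y^2) ≤ 1 - (4*x/5)/k := by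
      rw [div_le_iff₀ hD]
      have hD5 : (x + k)^2 + y^2 ≤ 5 * (k:ℝ)^2 := by nlinarith
      have : (4*x/5)/k * ((x + k)^2 + y^2) ≤ (4*x/5)/k * (5*(k:ℝ)^2) := by
        apply mul_le_mul_of_nonneg_left hD5 (by positivity)
      have heq : (4*x/5)/k * (5*(k:ℝ)^2) = 4*k*x := by field_simp
      have hexpand : (1 - (4*x/5)/k)*((x+k)^2+y^2) = ((x+k)^2+y^2) - (4*x/5)/k*((x+k)^2+y^2) := by ring
      have hDN : ((x+(k:ℝ))^2 + y^2) - ((x-k)^2 + y^2) = 4*k*x := by ring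
      linarith
    calc ((x - k)^2 + y^2) / ((x + k)^2 + y^2) ≤ 1 - (4*x/5)/k := hstep
      _ ≤ Real.exp (-(4*x/5)/k) := by
          have h5 := Real.add_one_le_exp (-(4*x/5)/k)
          have hh : -(4*x/5)/(k:ℝ) + 1 = 1 - 4*x/5/k := by ring
          linarith
  rw [norm_div, h1, h2]
  have := Real.sqrt_le_sqrt key
  rw [Real.sqrt_div (by positivity)] at this
  calc Real.sqrt ((x - k)^2 + y^2) / Real.sqrt ((x + k)^2 + y^2)
      ≤ Real.sqrt (Real.exp (-(4*x/5)/k)) := this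
    _ = Real.exp (-(2*x/5)/k) := by
        have h : Real.exp (-(4*x/5)/k) = Real.exp (-(2*x/5)/k) * Real.exp (-(2*x/5)/k) := by
          rw [← Real.exp_add]; ring_nf
        rw [h, Real.sqrt_mul_self (Real.exp_nonneg _)]


lemma exists_big_finset (f : ℂ → ℂ)
    (hdiv : ∑' k : {k : ℕ | 0 < k ∧ f (k : ℂ) = 0}, (1 : ℝ≥0∞) / ((k : ℕ) : ℝ≥0∞) = ⊤)
    (M : ℝ) (K : ℕ) :
    ∃ S : Finset ℕ, (∀ k ∈ S, K ≤ k ∧ 0 < k ∧ f (k:ℂ) = 0) ∧ M ≤ ∑ k ∈ S, (1:ℝ)/k := by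
  classical
  set E := {k : ℕ | 0 < k ∧ f (k : ℂ) = 0} with hE
  set g : E → ℝ≥0∞ := fun k => 1 / ((k : ℕ) : ℝ≥0∞) with hg
  have htop : (⨆ s : Finset E, ∑ k ∈ s, g k) = ⊤ := by
    rw [← ENNReal.tsum_eq_iSup_sum]; exact hdiv
  have hM : ENNReal.ofReal M + (K : ℝ≥0∞) < ⨆ s : Finset E, ∑ k ∈ s, g k := by
    rw [htop]
    exact lt_top_iff_ne_top.2 (ENNReal.add_ne_top.2 ⟨ENNReal.ofReal_ne_top, ENNReal.natCast_ne_top K⟩)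
  obtain ⟨T, hT⟩ := lt_iSup_iff.1 hM
  set Timg : Finset ℕ := T.image Subtype.val with hTimg
  have hTmem : ∀ k ∈ Timg, 0 < k ∧ f (k:ℂ) = 0 := by
    intro k hk
    simp only [hTimg, Finset.mem_image] at hk
    obtain ⟨⟨k', hk'⟩, _, rfl⟩ := hk
    exact hk'
  have hsum_img : ∑ k ∈ Timg, (1:ℝ≥0∞) / (k : ℝ≥0∞) = ∑ k ∈ T, g k := by
    rw [hTimg, Finset.sum_image (fun x _ y _ h => Subtype.ext h)]
  set S : Finset ℕ := Timg.filter (fun k => K ≤ k) with hS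
  have hSmem : ∀ k ∈ S, K ≤ k ∧ 0 < k ∧ f (k:ℂ) = 0 := by
    intro k hk
    rw [hS, Finset.mem_filter] at hk
    exact ⟨hk.2, hTmem k hk.1⟩
  -- bound the complementary sum
  have hrest : ∑ k ∈ Timg.filter (fun k => ¬ K ≤ k), (1:ℝ≥0∞) / (k : ℝ≥0∞) ≤ (K : ℝ≥0∞) := by
    have hsub : Timg.filter (fun k => ¬ K ≤ k) ⊆ Finset.Ico 1 K := by
      intro k hk
      rw [Finset.mem_filter] at hk
      rw [Finset.mem_Ico]
      exact ⟨(hTmem k hk.1).1, by omega⟩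
    calc ∑ k ∈ Timg.filter (fun k => ¬ K ≤ k), (1:ℝ≥0∞) / (k : ℝ≥0∞)
        ≤ (Timg.filter (fun k => ¬ K ≤ k)).card • (1:ℝ≥0∞) := by
          apply Finset.sum_le_card_nsmul
          intro k hk
          have hk1 : 1 ≤ k := (hTmem k (Finset.mem_filter.1 hk).1).1
          apply ENNReal.div_le_of_le_mul
          rw [one_mul]
          exact_mod_cast hk1
      _ ≤ (K : ℝ≥0∞) := by
          have := Finset.card_le_card hsub
          rw [nsmul_eq_mul, mul_one]
          calc ((Timg.filter (fun k => ¬ K ≤ k)).card : ℝ≥0∞) ≤ ((Finset.Ico 1 K).card : ℝ≥0∞) := by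
                exact_mod_cast this
            _ ≤ (K : ℝ≥0∞) := by
                rw [Nat.card_Ico]
                exact_mod_cast Nat.sub_le K 1
  have hsplit : ∑ k ∈ S, (1:ℝ≥0∞) / (k : ℝ≥0∞)
      + ∑ k ∈ Timg.filter (fun k => ¬ K ≤ k), (1:ℝ≥0∞) / (k : ℝ≥0∞)
      = ∑ k ∈ Timg, (1:ℝ≥0∞) / (k : ℝ≥0∞) := by
    rw [hS]
    exact Finset.sum_filter_add_sum_filter_not _ _ _
  have hbig : ENNReal.ofReal M < ∑ k ∈ S, (1:ℝ≥0∞) / (k : ℝ≥0∞) := by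
    have h1 : ENNReal.ofReal M + (K:ℝ≥0∞) < ∑ k ∈ S, (1:ℝ≥0∞) / (k : ℝ≥0∞) + (K:ℝ≥0∞) := by
      calc ENNReal.ofReal M + (K:ℝ≥0∞) < ∑ k ∈ T, g k := hT
        _ = ∑ k ∈ Timg, (1:ℝ≥0∞) / (k : ℝ≥0∞) := hsum_img.symm
        _ = _ := hsplit.symm
        _ ≤ _ := add_le_add_right hrest _
    exact lt_of_add_lt_add_right h1
  -- convert to a real statement
  have hconv : ∑ k ∈ S, (1:ℝ≥0∞) / (k : ℝ≥0∞) = ENNReal.ofReal (∑ k ∈ S, (1:ℝ)/k) := by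
    rw [ENNReal.ofReal_sum_of_nonneg (fun k _ => by positivity)]
    apply Finset.sum_congr rfl
    intro k hk
    have hkpos : 0 < k := (hSmem k hk).2.1
    rw [one_div, one_div, ENNReal.ofReal_inv_of_pos (by exact_mod_cast hkpos)]
    congr 1
    exact (ENNReal.ofReal_natCast k).symm
  rw [hconv] at hbig
  refine ⟨S, hSmem, ?_⟩
  by_contra h
  push_neg at h
  exact absurd (ENNReal.ofReal_le_ofReal h.le) (not_le.2 hbig)


lemma norm_quot_bound {f G : ℂ → ℂ} {S : Finset ℕ} {C P : ℝ} {z : ℂ}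
    (hfz : f z = (∏ k ∈ S, ((z - k)/(z + k))) * G z)
    (hfC : ‖f z‖ ≤ C) (hP : 0 < P)
    (hprod : P ≤ ∏ k ∈ S, ‖(z - k)/(z + k)‖) :
    ‖G z‖ ≤ C / P := by
  have h1 : ‖f z‖ = (∏ k ∈ S, ‖(z - k)/(z + k)‖) * ‖G z‖ := by
    rw [hfz, norm_mul, norm_prod]
  rw [le_div_iff₀ hP]
  calc ‖G z‖ * P ≤ ‖G z‖ * ∏ k ∈ S, ‖(z - k)/(z + k)‖ :=
        mul_le_mul_of_nonneg_left hprod (norm_nonneg _)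
    _ = ‖f z‖ := by rw [h1]; ring
    _ ≤ C := hfC

lemma bounded_quotient (f G : ℂ → ℂ) (C : ℝ) (S : Finset ℕ) (hS1 : ∀ k ∈ S, 1 ≤ k)
    (hG : DifferentiableOn ℂ G {z : ℂ | 0 < z.re})
    (hC : ∀ z ∈ {z : ℂ | 0 < z.re}, ‖f z‖ ≤ C)
    (hfact : ∀ z ∈ {z : ℂ | 0 < z.re}, f z = (∏ k ∈ S, ((z - k)/(z + k))) * G z) :
    ∀ w ∈ {z : ℂ | 0 < z.re}, ‖G w‖ ≤ C := by
  classical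
  set U := {z : ℂ | 0 < z.re} with hU
  set b : ℝ := (1/3 : ℝ) ^ S.card with hb
  have hbpos : 0 < b := by positivity
  set R : ℝ := 2 * ((S.sup id : ℕ) : ℝ) + 2 with hR
  have hRpos : 0 < R := by positivity
  -- far-away bound
  have hfar : ∀ z ∈ U, R ≤ ‖z‖ → ‖G z‖ ≤ C / b := by
    intro z hz hzR
    refine norm_quot_bound (hfact z hz) (hC z hz) hbpos ?_
    rw [hb, ← Finset.prod_const]
    apply Finset.prod_le_prod (fun k _ => by norm_num)
    intro k hk
    apply blaschke_lower_far k (hS1 k hk)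
    have : (k : ℝ) ≤ ((S.sup id : ℕ) : ℝ) := by
      exact_mod_cast Finset.le_sup (f := id) hk
    linarith
  -- Phragmen-Lindelof step for shifted function
  have hstep : ∀ δ : ℝ, 0 < δ → δ < 1 → ∀ z : ℂ, 0 ≤ z.re →
      ‖G (z + δ)‖ ≤ C / ∏ k ∈ S, (((k:ℝ) - δ) / ((k:ℝ) + δ)) := by
    intro δ hδ0 hδ1 z hz
    set P : ℝ := ∏ k ∈ S, (((k:ℝ) - δ) / ((k:ℝ) + δ)) with hP
    have hPpos : 0 < P := by
      apply Finset.prod_pos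
      intro k hk
      have : (1:ℝ) ≤ (k:ℝ) := by exact_mod_cast hS1 k hk
      apply div_pos <;> linarith
    have hCb : 0 ≤ C := le_trans (norm_nonneg _) (hC 1 (by norm_num [hU]))
    apply PhragmenLindelof.right_half_plane_of_bounded_on_real
      (f := fun w => G (w + δ)) (C := C / P) (z := z) _ _ _ _ hz
    · -- differentiability
      apply DifferentiableOn.diffContOnCl
      rw [closure_setOf_lt_re]
      apply DifferentiableOn.comp hG
        ((differentiable_id.add_const _).differentiableOn)
      intro w hw
      simp only [hU, Set.mem_setOf_eq] at *
      have : (0:ℝ) ≤ w.re := hw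
      simp only [Complex.add_re, Complex.ofReal_re, id_eq]
      linarith
    · -- growth condition
      refine ⟨1, one_lt_two, 0, ?_⟩
      apply Asymptotics.IsBigO.of_bound (C / b)
      have hcob : ∀ᶠ w : ℂ in Bornology.cobounded ℂ, R + 1 ≤ ‖w‖ := by
        rw [Metric.cobounded_eq_cocompact]
        exact tendsto_norm_cocompact_atTop.eventually_ge_atTop (R + 1)
      rw [eventually_inf_principal]
      filter_upwards [hcob] with w hw hwU
      have hwre : 0 < w.re := hwU
      have habs : R ≤ ‖w + δ‖ := by
        have h3 : ‖w‖ ≤ ‖w + δ‖ + δ := by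
          have := norm_sub_le (w + (δ:ℂ)) ((δ:ℂ))
          simp only [add_sub_cancel_right] at this
          have hd : ‖(δ:ℂ)‖ = δ := by
            simp [abs_of_pos hδ0]
          rw [hd] at this
          simpa using this
        linarith
      have hmem : w + (δ:ℂ) ∈ U := by
        simp only [hU, Set.mem_setOf_eq, Complex.add_re, Complex.ofReal_re]
        linarith
      have := hfar _ hmem habs
      calc ‖G (w + δ)‖ ≤ C / b := this
        _ ≤ C / b * ‖Real.exp (0 * ‖w‖ ^ (1:ℝ))‖ := by
            simp
    · -- bounded on real axis
      apply Filter.isBoundedUnder_of_eventually_le (a := C / b)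
      filter_upwards [Filter.eventually_ge_atTop R] with x hx
      have hmem : (x:ℂ) + (δ:ℂ) ∈ U := by
        simp only [hU, Set.mem_setOf_eq, Complex.add_re, Complex.ofReal_re]
        linarith
      apply hfar _ hmem
      calc R ≤ x := hx
        _ ≤ ((x:ℂ) + (δ:ℂ)).re := by
            simp only [Complex.add_re, Complex.ofReal_re]; linarith
        _ ≤ ‖(x:ℂ) + δ‖ := Complex.re_le_norm _
    · -- bound on the imaginary axis
      intro y
      have heq : (y:ℂ) * I + δ = (δ:ℂ) + y * I := by ring
      show ‖G ((y:ℂ) * I + (δ:ℂ))‖ ≤ C / P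
      rw [heq]
      have hmem : (δ:ℂ) + (y:ℂ) * I ∈ U := by
        simp [hU, Set.mem_setOf_eq, hδ0]
      refine norm_quot_bound (hfact _ hmem) (hC _ hmem) hPpos ?_
      apply Finset.prod_le_prod
      · intro k hk
        have : (1:ℝ) ≤ (k:ℝ) := by exact_mod_cast hS1 k hk
        apply div_nonneg <;> linarith
      · intro k hk
        exact blaschke_lower_axis k (hS1 k hk) hδ0 hδ1 y
  -- take the limit δ → 0⁺
  intro w hw
  have hwre : 0 < w.re := hw
  have hm : (0:ℝ) < min 1 w.re := lt_min one_pos hwre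
  have hev : ∀ᶠ δ : ℝ in 𝓝[>] (0:ℝ),
      ‖G w‖ ≤ C / ∏ k ∈ S, (((k:ℝ) - δ) / ((k:ℝ) + δ)) := by
    filter_upwards [Ioo_mem_nhdsGT_of_mem (Set.left_mem_Ico.2 hm)] with δ hδ
    obtain ⟨hδ0, hδm⟩ := hδ
    have hδ1 : δ < 1 := lt_of_lt_of_le hδm (min_le_left _ _)
    have hδw : δ ≤ w.re := le_of_lt (lt_of_lt_of_le hδm (min_le_right _ _))
    have := hstep δ hδ0 hδ1 (w - δ) (by simp [Complex.sub_re]; linarith)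
    simpa using this
  have htend : Tendsto (fun δ : ℝ => C / ∏ k ∈ S, (((k:ℝ) - δ) / ((k:ℝ) + δ)))
      (𝓝[>] (0:ℝ)) (𝓝 C) := by
    have hprod : Tendsto (fun δ : ℝ => ∏ k ∈ S, (((k:ℝ) - δ) / ((k:ℝ) + δ)))
        (𝓝[>] (0:ℝ)) (𝓝 1) := by
      have h1 : ∏ k ∈ S, (((k:ℝ) - 0) / ((k:ℝ) + 0)) = 1 := by
        apply Finset.prod_eq_one
        intro k hk
        have hk0 : (0:ℝ) < (k:ℝ) := lt_of_lt_of_le one_pos (by exact_mod_cast hS1 k hk)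
        rw [sub_zero, add_zero, div_self hk0.ne']
      rw [← h1]
      apply Filter.Tendsto.mono_left _ nhdsWithin_le_nhds
      apply tendsto_finset_prod
      intro k hk
      have hk0 : (0:ℝ) < (k:ℝ) := lt_of_lt_of_le one_pos (by exact_mod_cast hS1 k hk)
      apply Filter.Tendsto.div
      · exact (continuous_const.sub continuous_id).tendsto 0
      · exact (continuous_const.add continuous_id).tendsto 0
      · simpa using hk0.ne'
    have := Filter.Tendsto.div (tendsto_const_nhds (x := C)) hprod one_ne_zero
    rwa [div_one] at this
  exact ge_of_tendsto htend hev


/-- If a bounded holomorphic function on the right half-plane vanishes on a set of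
positive integers whose reciprocals have divergent sum, then it vanishes identically. -/
theorem stmt_0 (f : ℂ → ℂ)
    (hdiff : DifferentiableOn ℂ f {z : ℂ | 0 < z.re})
    (hbdd : ∃ C : ℝ, ∀ z ∈ {z : ℂ | 0 < z.re}, ‖f z‖ ≤ C)
    (hdiv : ∑' k : {k : ℕ | 0 < k ∧ f (k : ℂ) = 0}, (1 : ℝ≥0∞) / ((k : ℕ) : ℝ≥0∞) = ⊤) :
    ∀ z : ℂ, 0 < z.re → f z = 0 := by
  intro z₀ hz₀
  by_contra hne
  obtain ⟨C, hC⟩ := hbdd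
  have hz₀U : z₀ ∈ {z : ℂ | 0 < z.re} := hz₀
  set ε := ‖f z₀‖ with hε
  have hεpos : 0 < ε := norm_pos_iff.2 hne
  have hCpos : 0 < C := lt_of_lt_of_le hεpos (hC z₀ hz₀U)
  set x := z₀.re with hx
  have hxpos : 0 < x := hz₀
  obtain ⟨K, hK⟩ := exists_nat_ge (x + |z₀.im|)
  set M : ℝ := (5/(2*x)) * Real.log (C/ε) + 1 with hM
  obtain ⟨S, hSmem, hSsum⟩ := exists_big_finset f hdiv M K
  have hS1 : ∀ k ∈ S, 1 ≤ k := fun k hk => (hSmem k hk).2.1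
  obtain ⟨G, hGdiff, hfact⟩ := factor_out f hdiff S (fun k hk => (hSmem k hk).2)
  have hGb := bounded_quotient f G C S hS1 hGdiff hC hfact
  have hyabs : (0:ℝ) ≤ |z₀.im| := abs_nonneg _
  -- pointwise smallness of Blaschke factors at z₀
  have hsmall : ∀ k ∈ S, ‖(z₀ - k)/(z₀ + k)‖ ≤ Real.exp (-(2*x/5)/k) := by
    intro k hk
    have hKk : (K:ℝ) ≤ (k:ℝ) := by exact_mod_cast (hSmem k hk).1
    exact blaschke_small k hxpos (by linarith) (by linarith)
  have hprod : ∏ k ∈ S, ‖(z₀ - k)/(z₀ + k)‖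
      ≤ Real.exp (-(2*x/5) * ∑ k ∈ S, (1:ℝ)/k) := by
    calc ∏ k ∈ S, ‖(z₀ - k)/(z₀ + k)‖
        ≤ ∏ k ∈ S, Real.exp (-(2*x/5)/k) :=
          Finset.prod_le_prod (fun k _ => norm_nonneg _) hsmall
      _ = Real.exp (∑ k ∈ S, -(2*x/5)/k) := (Real.exp_sum _ _).symm
      _ = Real.exp (-(2*x/5) * ∑ k ∈ S, (1:ℝ)/k) := by
          congr 1
          rw [Finset.mul_sum]
          apply Finset.sum_congr rfl
          intro k _
          ring
  -- combine
  have hkey : ε ≤ C * Real.exp (-(2*x/5) * ∑ k ∈ S, (1:ℝ)/k) := by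
    have h1 : ‖f z₀‖ = (∏ k ∈ S, ‖(z₀ - k)/(z₀ + k)‖) * ‖G z₀‖ := by
      rw [hfact z₀ hz₀U, norm_mul, norm_prod]
    rw [hε, h1]
    calc (∏ k ∈ S, ‖(z₀ - k)/(z₀ + k)‖) * ‖G z₀‖
        ≤ Real.exp (-(2*x/5) * ∑ k ∈ S, (1:ℝ)/k) * C := by
          apply mul_le_mul hprod (hGb z₀ hz₀U) (norm_nonneg _) (Real.exp_nonneg _)
      _ = C * Real.exp (-(2*x/5) * ∑ k ∈ S, (1:ℝ)/k) := by ring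
  -- now derive the contradiction
  have hmono : Real.exp (-(2*x/5) * ∑ k ∈ S, (1:ℝ)/k) ≤ Real.exp (-(2*x/5) * M) := by
    apply Real.exp_le_exp.2
    have h2 : (0:ℝ) < 2*x/5 := by linarith
    nlinarith [hSsum]
  have hval : Real.exp (-(2*x/5) * M) = (ε/C) * Real.exp (-(2*x/5)) := by
    have hxne : x ≠ 0 := hxpos.ne'
    have harg : -(2*x/5) * M = -Real.log (C/ε) + (-(2*x/5)) := by
      rw [hM]; field_simp; ring
    rw [harg, Real.exp_add, Real.exp_neg, Real.exp_log (by positivity)]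
    rw [inv_div]
  have hlast : C * Real.exp (-(2*x/5) * M) < ε := by
    rw [hval]
    have hexp1 : Real.exp (-(2*x/5)) < 1 := Real.exp_lt_one_iff.2 (by linarith)
    calc C * ((ε/C) * Real.exp (-(2*x/5))) = ε * Real.exp (-(2*x/5)) := by
          field_simp
      _ < ε * 1 := by
          apply mul_lt_mul_of_pos_left hexp1 hεpos
      _ = ε := mul_one ε
  have : ε < ε := lt_of_le_of_lt (hkey.trans (mul_le_mul_of_nonneg_left hmono hCpos.le)) hlast
  exact lt_irrefl _ this
end

section
/- Define a subset E ⊆ ℕ₀ⁿ to satisfy condition (I) if it contains a subset Ê ⊆ (ℕ₊)ⁿ such that ∑_{k ∈ π₁(Ê)} 1/k = ∞ and for every 1 ≤ j < n and every j-tuple (a₁,…,a_j) of positive integers whose fiber Ê(a₁,…,a_j) = {a ∈ Ê : π_k(a) = a_k for k ≤ j} is nonempty, this fiber is thick, i.e. ∑_{k ∈ π_{j+1}(Ê(a₁,…,a_j)) ∩ ℕ₊} 1/k = ∞. Prove: if Z₁, Z₂ ⊆ ℕ₀ⁿ and Z₁ ∪ Z₂ satisfies condition (I), then Z₁ satisfies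 condition (I) or Z₂ satisfies condition (I). -/
open scoped ENNReal

/-- The fiber of `E` consisting of multi-indices whose coordinates below `j`
agree with those of `a`. -/
def fiberSet {n : ℕ} (E : Set (Fin n → ℕ)) (j : Fin n) (a : Fin n → ℕ) :
    Set (Fin n → ℕ) :=
  {x ∈ E | ∀ i : Fin n, i < j → x i = a i}

/-- A set `F` of multi-indices is *thick* in the coordinate `j` if the positive
integers occurring as `j`-th coordinates of elements of `F` have divergent
sum of reciprocals. -/
def ThickAt {n : ℕ} (F : Set (Fin n → ℕ)) (j : Fin n) : Prop :=
  ∑' k : {k : ℕ | 0 < k ∧ ∃ x ∈ F, x j = k}, (1 : ℝ≥0∞) / ((k : ℕ) : ℝ≥0∞) = ⊤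

/-- Condition (I): `E` contains a subset `Ê` of positive multi-indices such that the
first coordinates of `Ê` have divergent sum of reciprocals and, for every `j ≥ 1`,
every nonempty fiber of `Ê` obtained by fixing the first `j` coordinates is thick
in the `(j+1)`-st coordinate. -/
def CondI {n : ℕ} [NeZero n] (E : Set (Fin n → ℕ)) : Prop :=
  ∃ Ehat : Set (Fin n → ℕ), Ehat ⊆ E ∧ (∀ x ∈ Ehat, ∀ i, 0 < x i) ∧
    ThickAt Ehat 0 ∧
    ∀ j : Fin n, 0 < j → ∀ a : Fin n → ℕ,
      (fiberSet Ehat j a).Nonempty → ThickAt (fiberSet Ehat j a) j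

namespace Stmt3Aux

variable {n : ℕ}

lemma tsum_set_mono {S T : Set ℕ} (h : S ⊆ T)
    (hS : ∑' k : S, (1 : ℝ≥0∞) / ((k : ℕ) : ℝ≥0∞) = ⊤) :
    ∑' k : T, (1 : ℝ≥0∞) / ((k : ℕ) : ℝ≥0∞) = ⊤ := by
  have e1 := tsum_subtype (α := ℝ≥0∞) S (fun k : ℕ => 1 / (k : ℝ≥0∞))
  have e2 := tsum_subtype (α := ℝ≥0∞) T (fun k : ℕ => 1 / (k : ℝ≥0∞))
  rw [e1] at hS
  rw [e2]
  refine top_le_iff.mp ?_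
  rw [← hS]
  exact Summable.tsum_le_tsum
    (fun k => Set.indicator_le_indicator_of_subset h (fun _ => zero_le) k)
    ENNReal.summable ENNReal.summable

lemma thick_of_subset {F G : Set (Fin n → ℕ)} {j : Fin n} (h : F ⊆ G)
    (hF : ThickAt F j) : ThickAt G j := by
  refine tsum_set_mono ?_ hF
  rintro k ⟨hk, x, hx, hxk⟩
  exact ⟨hk, x, h hx, hxk⟩

lemma thick_nonempty {F : Set (Fin n → ℕ)} {j : Fin n} (h : ThickAt F j) :
    F.Nonempty := by
  by_contra hne
  rw [Set.not_nonempty_iff_eq_empty] at hne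
  subst hne
  have he : {k : ℕ | 0 < k ∧ ∃ x ∈ (∅ : Set (Fin n → ℕ)), x j = k} = ∅ := by
    ext k; simp
  rw [ThickAt, he] at h
  simp at h

lemma thick_split {A B C : Set (Fin n → ℕ)} {j : Fin n}
    (h : {k : ℕ | 0 < k ∧ ∃ x ∈ A, x j = k} ⊆
      {k : ℕ | 0 < k ∧ ∃ x ∈ B, x j = k} ∪ {k : ℕ | 0 < k ∧ ∃ x ∈ C, x j = k})
    (hA : ThickAt A j) : ThickAt B j ∨ ThickAt C j := by
  by_contra hc
  push_neg at hc
  have h1 : (⊤ : ℝ≥0∞) ≤ ∑' k : ({k : ℕ | 0 < k ∧ ∃ x ∈ B, x j = k} ∪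
      {k : ℕ | 0 < k ∧ ∃ x ∈ C, x j = k} : Set ℕ), (1 : ℝ≥0∞) / ((k : ℕ) : ℝ≥0∞) := by
    rw [tsum_set_mono h hA]
  have h2 := ENNReal.tsum_union_le (fun k : ℕ => (1 : ℝ≥0∞) / ((k : ℕ) : ℝ≥0∞))
    {k : ℕ | 0 < k ∧ ∃ x ∈ B, x j = k} {k : ℕ | 0 < k ∧ ∃ x ∈ C, x j = k}
  have h3 := le_trans h1 h2
  rw [top_le_iff, ENNReal.add_eq_top] at h3
  rcases h3 with h3 | h3
  · exact hc.1 h3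
  · exact hc.2 h3

variable [NeZero n]

/-- colors of the nodes of the tree: `Mono m y` says that all ancestors of the
leaf `y` at heights `≤ m` (levels `≥ n - m`) are colored "true", where a node
is colored true iff the set of values at its coordinate realized by true-monochromatic
leaves below it is thick. -/
def Mono (E Z : Set (Fin n → ℕ)) : ℕ → (Fin n → ℕ) → Prop
  | 0, x => x ∈ Z
  | m + 1, x => Mono E Z m x ∧
      ThickAt {y ∈ E | (∀ i : Fin n, (i : ℕ) < n - m - 1 → y i = x i) ∧ Mono E Z m y}
        ⟨n - m - 1, by have := Nat.pos_of_ne_zero (NeZero.ne n); omega⟩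

def MonoF (E Z : Set (Fin n → ℕ)) : ℕ → (Fin n → ℕ) → Prop
  | 0, x => x ∉ Z
  | m + 1, x => MonoF E Z m x ∧
      ¬ ThickAt {y ∈ E | (∀ i : Fin n, (i : ℕ) < n - m - 1 → y i = x i) ∧ Mono E Z m y}
        ⟨n - m - 1, by have := Nat.pos_of_ne_zero (NeZero.ne n); omega⟩

variable {E Z : Set (Fin n → ℕ)}

lemma mono_le : ∀ {m m' : ℕ}, m' ≤ m → ∀ {x}, Mono E Z m x → Mono E Z m' x := by
  intro m
  induction m with
  | zero => intro m' hm' x h; rw [Nat.le_zero.mp hm']; exact h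
  | succ m ih =>
    intro m' hm' x h
    rcases Nat.lt_or_ge m' (m + 1) with h' | h'
    · exact ih (Nat.lt_succ_iff.mp h') h.1
    · have : m' = m + 1 := le_antisymm hm' h'
      rw [this]; exact h

lemma monoF_le : ∀ {m m' : ℕ}, m' ≤ m → ∀ {x}, MonoF E Z m x → MonoF E Z m' x := by
  intro m
  induction m with
  | zero => intro m' hm' x h; rw [Nat.le_zero.mp hm']; exact h
  | succ m ih =>
    intro m' hm' x h
    rcases Nat.lt_or_ge m' (m + 1) with h' | h'
    · exact ih (Nat.lt_succ_iff.mp h') h.1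
    · have : m' = m + 1 := le_antisymm hm' h'
      rw [this]; exact h

/-- the thickness-set in the definition of `Mono`/`MonoF` depends only on the
coordinates of `x` below `n - m - 1`. -/
lemma colSet_congr (m : ℕ) {x x' : Fin n → ℕ}
    (h : ∀ i : Fin n, (i : ℕ) < n - m - 1 → x i = x' i) :
    {y ∈ E | (∀ i : Fin n, (i : ℕ) < n - m - 1 → y i = x i) ∧ Mono E Z m y} =
    {y ∈ E | (∀ i : Fin n, (i : ℕ) < n - m - 1 → y i = x' i) ∧ Mono E Z m y} := by
  ext y
  constructor
  · rintro ⟨h1, h2, h3⟩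
    exact ⟨h1, fun i hi => by rw [h2 i hi, h i hi], h3⟩
  · rintro ⟨h1, h2, h3⟩
    exact ⟨h1, fun i hi => by rw [h2 i hi, ← h i hi], h3⟩

/-- upgrading: a `Mono m` leaf agreeing with a `Mono (m+t)` leaf below `n - m`
is itself `Mono (m+t)`. -/
lemma mono_lift : ∀ (t : ℕ) (m : ℕ) {x y : Fin n → ℕ},
    Mono E Z m x → Mono E Z (m + t) y →
    (∀ i : Fin n, (i : ℕ) < n - m → x i = y i) → Mono E Z (m + t) x := by
  intro t
  induction t with
  | zero => intro m x y hx _ _; exact hx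
  | succ t ih =>
    intro m x y hx hy hag
    rw [Nat.add_succ] at hy ⊢
    have hy' : Mono E Z (m + t) y := hy.1
    have hx' : Mono E Z (m + t) x := ih m hx hy' hag
    refine ⟨hx', ?_⟩
    have hag' : ∀ i : Fin n, (i : ℕ) < n - (m + t) - 1 → x i = y i := by
      intro i hi; exact hag i (by omega)
    rw [colSet_congr (m + t) hag']
    exact hy.2

lemma monoF_lift : ∀ (t : ℕ) (m : ℕ) {x y : Fin n → ℕ},
    MonoF E Z m x → MonoF E Z (m + t) y →
    (∀ i : Fin n, (i : ℕ) < n - m → x i = y i) → MonoF E Z (m + t) x := by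
  intro t
  induction t with
  | zero => intro m x y hx _ _; exact hx
  | succ t ih =>
    intro t' x y hx hy hag  -- t' plays role of m
    rw [Nat.add_succ] at hy ⊢
    have hy' : MonoF E Z (t' + t) y := hy.1
    have hx' : MonoF E Z (t' + t) x := ih t' hx hy' hag
    refine ⟨hx', ?_⟩
    have hag' : ∀ i : Fin n, (i : ℕ) < n - (t' + t) - 1 → x i = y i := by
      intro i hi; exact hag i (by omega)
    rw [colSet_congr (t' + t) hag']
    exact hy.2

section Main

/-- thickness of full fibers of `E`, uniform over heights `1 ≤ m ≤ n`. -/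
lemma fiber_thick (hroot : ThickAt E 0)
    (hfib : ∀ j : Fin n, 0 < j → ∀ a : Fin n → ℕ,
      (fiberSet E j a).Nonempty → ThickAt (fiberSet E j a) j) (m : ℕ) (hm1 : 1 ≤ m) (hm : m ≤ n) (a : Fin n → ℕ)
    (hne : ({y ∈ E | ∀ i : Fin n, (i : ℕ) < n - m → y i = a i}).Nonempty) :
    ThickAt {y ∈ E | ∀ i : Fin n, (i : ℕ) < n - m → y i = a i}
      ⟨n - m, by have := Nat.pos_of_ne_zero (NeZero.ne n); omega⟩ := by
  have hn : 0 < n := Nat.pos_of_ne_zero (NeZero.ne n)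
  rcases Nat.lt_or_ge m n with hmn | hmn
  · -- interior fiber: use hfib with j = ⟨n - m⟩, 0 < j
    have hj : (0 : Fin n) < ⟨n - m, by omega⟩ := by
      simp [Fin.lt_def]
      omega
    have hfEq : fiberSet E ⟨n - m, by omega⟩ a =
        {y ∈ E | ∀ i : Fin n, (i : ℕ) < n - m → y i = a i} := by
      ext y
      simp [fiberSet, Fin.lt_def]
    rw [← hfEq] at hne ⊢
    exact hfib _ hj a hne
  · -- m = n : the root
    have hm' : m = n := le_antisymm hm hmn
    have hz : n - m = 0 := by omega
    have hfEq : {y ∈ E | ∀ i : Fin n, (i : ℕ) < n - m → y i = a i} = E := by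
      ext y
      simp only [Set.mem_setOf_eq, hz]
      exact ⟨fun h => h.1, fun h => ⟨h, fun i hi => absurd hi (by omega)⟩⟩
    rw [hfEq]
    have hje : (⟨n - m, by omega⟩ : Fin n) = 0 := by
      apply Fin.ext
      simp [hz]
    rw [hje]
    exact hroot

/-- every nonempty fiber contains a `Mono` or `MonoF` leaf. -/
lemma claim (hroot : ThickAt E 0)
    (hfib : ∀ j : Fin n, 0 < j → ∀ a : Fin n → ℕ,
      (fiberSet E j a).Nonempty → ThickAt (fiberSet E j a) j) : ∀ m : ℕ, m ≤ n → ∀ a : Fin n → ℕ,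
    ({y ∈ E | ∀ i : Fin n, (i : ℕ) < n - m → y i = a i}).Nonempty →
    ∃ y ∈ E, (∀ i : Fin n, (i : ℕ) < n - m → y i = a i) ∧
      (Mono E Z m y ∨ MonoF E Z m y) := by
  intro m
  induction m with
  | zero =>
    rintro _ a ⟨y, hyE, hag⟩
    exact ⟨y, hyE, hag, by
      rcases Classical.em (y ∈ Z) with h | h
      · exact Or.inl h
      · exact Or.inr h⟩
  | succ m ih =>
    rintro hm a ⟨y₀, hy₀E, hag₀⟩
    have hn : 0 < n := Nat.pos_of_ne_zero (NeZero.ne n)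
    have hc : n - m - 1 = n - (m + 1) := by omega
    by_cases hcol : ThickAt
        {y ∈ E | (∀ i : Fin n, (i : ℕ) < n - m - 1 → y i = a i) ∧ Mono E Z m y}
        ⟨n - m - 1, by omega⟩
    · -- true-colored node: pick a Mono leaf from the (nonempty since thick) true-set
      obtain ⟨y, hyE, hagy, hMy⟩ := thick_nonempty hcol
      refine ⟨y, hyE, by rw [← hc]; exact hagy, Or.inl ⟨hMy, ?_⟩⟩
      rw [colSet_congr m (fun i hi => (hagy i hi).symm)] at hcol
      exact hcol
    · -- false-colored node: split the thick full fiber to find a MonoF leaf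
      have hthick := fiber_thick hroot hfib (m + 1) (Nat.succ_le_succ (Nat.zero_le m))
        hm a ⟨y₀, hy₀E, hag₀⟩
      have hsplit := thick_split (A := {y ∈ E | ∀ i : Fin n, (i : ℕ) < n - (m+1) → y i = a i})
        (B := {y ∈ E | (∀ i : Fin n, (i : ℕ) < n - m - 1 → y i = a i) ∧ Mono E Z m y})
        (C := {y ∈ E | (∀ i : Fin n, (i : ℕ) < n - m - 1 → y i = a i) ∧ MonoF E Z m y})
        (j := ⟨n - m - 1, by omega⟩) ?_ ?_
      · rcases hsplit with hB | hC
        · exact absurd hB hcol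
        · obtain ⟨y, hyE, hagy, hMFy⟩ := thick_nonempty hC
          refine ⟨y, hyE, by rw [← hc]; exact hagy, Or.inr ⟨hMFy, ?_⟩⟩
          rw [colSet_congr m (fun i hi => hagy i hi)]
          exact hcol
      · -- value-set inclusion via the inductive hypothesis applied to child fibers
        rintro k ⟨hk, x, ⟨hxE, hagx⟩, hxk⟩
        have hxfib : ({y ∈ E | ∀ i : Fin n, (i : ℕ) < n - m → y i = x i}).Nonempty :=
          ⟨x, hxE, fun i _ => rfl⟩
        obtain ⟨y, hyE, hagy, hMy⟩ := ih (le_of_lt hm) x hxfib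
        have hyk : y ⟨n - m - 1, by omega⟩ = k := by
          rw [hagy ⟨n - m - 1, by omega⟩ (by simp; omega), hxk]
        have hagya : ∀ i : Fin n, (i : ℕ) < n - m - 1 → y i = a i := by
          intro i hi
          rw [hagy i (by omega), hagx i (by rw [← hc]; exact hi)]
        rcases hMy with hMy | hMy
        · exact Or.inl ⟨hk, y, ⟨hyE, hagya, hMy⟩, hyk⟩
        · exact Or.inr ⟨hk, y, ⟨hyE, hagya, hMy⟩, hyk⟩
      · have hje : (⟨n - m - 1, by omega⟩ : Fin n) =
            ⟨n - (m + 1), by omega⟩ := Fin.ext hc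
        rw [hje]
        exact hthick

/-- the false analogue of the thickness condition: at a false-colored node with
nonempty fiber, the `MonoF` leaves realize a thick set of values. -/
lemma colF (hroot : ThickAt E 0)
    (hfib : ∀ j : Fin n, 0 < j → ∀ a : Fin n → ℕ,
      (fiberSet E j a).Nonempty → ThickAt (fiberSet E j a) j)
    (m : ℕ) (hm : m + 1 ≤ n) {y₀ : Fin n → ℕ} (hy₀ : y₀ ∈ E)
    (hnot : ¬ ThickAt {y ∈ E | (∀ i : Fin n, (i : ℕ) < n - m - 1 → y i = y₀ i) ∧ Mono E Z m y}
      ⟨n - m - 1, by have := Nat.pos_of_ne_zero (NeZero.ne n); omega⟩) :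
    ThickAt {y ∈ E | (∀ i : Fin n, (i : ℕ) < n - m - 1 → y i = y₀ i) ∧ MonoF E Z m y}
      ⟨n - m - 1, by have := Nat.pos_of_ne_zero (NeZero.ne n); omega⟩ := by
  have hn : 0 < n := Nat.pos_of_ne_zero (NeZero.ne n)
  have hc : n - m - 1 = n - (m + 1) := by omega
  have hthick := fiber_thick hroot hfib (m + 1) (Nat.succ_le_succ (Nat.zero_le m)) hm y₀
    ⟨y₀, hy₀, fun i _ => rfl⟩
  have hsplit := thick_split
    (A := {y ∈ E | ∀ i : Fin n, (i : ℕ) < n - (m + 1) → y i = y₀ i})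
    (B := {y ∈ E | (∀ i : Fin n, (i : ℕ) < n - m - 1 → y i = y₀ i) ∧ Mono E Z m y})
    (C := {y ∈ E | (∀ i : Fin n, (i : ℕ) < n - m - 1 → y i = y₀ i) ∧ MonoF E Z m y})
    (j := ⟨n - m - 1, by omega⟩) ?_ ?_
  · rcases hsplit with hB | hC
    · exact absurd hB hnot
    · exact hC
  · rintro k ⟨hk, x, ⟨hxE, hagx⟩, hxk⟩
    obtain ⟨y, hyE, hagy, hMy⟩ := claim hroot hfib m (by omega) x ⟨x, hxE, fun i _ => rfl⟩
    have hyk : y ⟨n - m - 1, by omega⟩ = k := by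
      rw [hagy ⟨n - m - 1, by omega⟩ (by simp; omega), hxk]
    have hagyy : ∀ i : Fin n, (i : ℕ) < n - m - 1 → y i = y₀ i := by
      intro i hi
      rw [hagy i (by omega), hagx i (by omega)]
    rcases hMy with hMy | hMy
    · exact Or.inl ⟨hk, y, ⟨hyE, hagyy, hMy⟩, hyk⟩
    · exact Or.inr ⟨hk, y, ⟨hyE, hagyy, hMy⟩, hyk⟩
  · have hje : (⟨n - m - 1, by omega⟩ : Fin n) = ⟨n - (m + 1), by omega⟩ := Fin.ext hc
    rw [hje]
    exact hthick

/-- fibers of the true-monochromatic subtree are thick. -/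
lemma thick_final_T (m : ℕ) (hm1 : 1 ≤ m) (hm : m ≤ n) {y₀ : Fin n → ℕ}
    (hM : Mono E Z n y₀) :
    ThickAt {y ∈ E | (∀ i : Fin n, (i : ℕ) < n - m → y i = y₀ i) ∧ Mono E Z n y}
      ⟨n - m, by have := Nat.pos_of_ne_zero (NeZero.ne n); omega⟩ := by
  have hn : 0 < n := Nat.pos_of_ne_zero (NeZero.ne n)
  obtain ⟨t, rfl⟩ : ∃ t, m = t + 1 := ⟨m - 1, by omega⟩
  have hMm : Mono E Z (t + 1) y₀ := mono_le hm hM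
  have hthick := hMm.2
  have hje : (⟨n - (t + 1), by omega⟩ : Fin n) = ⟨n - t - 1, by omega⟩ :=
    Fin.ext (show n - (t + 1) = n - t - 1 by omega)
  rw [hje]
  refine thick_of_subset ?_ hthick
  rintro y ⟨hyE, hagy, hMty⟩
  have hMt1 : Mono E Z (t + 1) y := ⟨hMty, by rw [colSet_congr t hagy]; exact hMm.2⟩
  have hn' : (t + 1) + (n - (t + 1)) = n := by omega
  have hMn : Mono E Z ((t + 1) + (n - (t + 1))) y :=
    mono_lift (n - (t + 1)) (t + 1) hMt1 (by rw [hn']; exact hM)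
      (fun i hi => hagy i (by omega))
  rw [hn'] at hMn
  exact ⟨hyE, fun i hi => hagy i (by omega), hMn⟩

/-- fibers of the false-monochromatic subtree are thick. -/
lemma thick_final_F (hroot : ThickAt E 0)
    (hfib : ∀ j : Fin n, 0 < j → ∀ a : Fin n → ℕ,
      (fiberSet E j a).Nonempty → ThickAt (fiberSet E j a) j)
    (m : ℕ) (hm1 : 1 ≤ m) (hm : m ≤ n) {y₀ : Fin n → ℕ} (hy₀ : y₀ ∈ E)
    (hM : MonoF E Z n y₀) :
    ThickAt {y ∈ E | (∀ i : Fin n, (i : ℕ) < n - m → y i = y₀ i) ∧ MonoF E Z n y}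
      ⟨n - m, by have := Nat.pos_of_ne_zero (NeZero.ne n); omega⟩ := by
  have hn : 0 < n := Nat.pos_of_ne_zero (NeZero.ne n)
  obtain ⟨t, rfl⟩ : ∃ t, m = t + 1 := ⟨m - 1, by omega⟩
  have hMm : MonoF E Z (t + 1) y₀ := monoF_le hm hM
  have hnot := hMm.2
  have hS' := colF hroot hfib t hm hy₀ hnot
  have hje : (⟨n - (t + 1), by omega⟩ : Fin n) = ⟨n - t - 1, by omega⟩ :=
    Fin.ext (show n - (t + 1) = n - t - 1 by omega)
  rw [hje]
  refine thick_of_subset ?_ hS'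
  rintro y ⟨hyE, hagy, hMFt⟩
  have hMF1 : MonoF E Z (t + 1) y := ⟨hMFt, by rw [colSet_congr t hagy]; exact hnot⟩
  have hn' : (t + 1) + (n - (t + 1)) = n := by omega
  have hMn : MonoF E Z ((t + 1) + (n - (t + 1))) y :=
    monoF_lift (n - (t + 1)) (t + 1) hMF1 (by rw [hn']; exact hM)
      (fun i hi => hagy i (by omega))
  rw [hn'] at hMn
  exact ⟨hyE, fun i hi => hagy i (by omega), hMn⟩

end Main

end Stmt3Aux

/-- If `Z₁ ∪ Z₂` satisfies condition (I), then `Z₁` or `Z₂` satisfies condition (I). -/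
theorem stmt_3 {n : ℕ} [NeZero n] (Z₁ Z₂ : Set (Fin n → ℕ))
    (h : CondI (Z₁ ∪ Z₂)) : CondI Z₁ ∨ CondI Z₂ := by
  obtain ⟨E, hsub, hpos, hroot, hfib⟩ := h
  have hn : 0 < n := Nat.pos_of_ne_zero (NeZero.ne n)
  obtain ⟨x₀, hx₀⟩ := Stmt3Aux.thick_nonempty hroot
  obtain ⟨y₀, hy₀E, -, hM⟩ := Stmt3Aux.claim (Z := Z₁) hroot hfib n le_rfl x₀
    ⟨x₀, hx₀, fun i hi => absurd hi (by omega)⟩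
  rcases hM with hM | hM
  · left
    refine ⟨{y ∈ E | Stmt3Aux.Mono E Z₁ n y}, ?_, ?_, ?_, ?_⟩
    · rintro y ⟨hyE, hMy⟩
      exact Stmt3Aux.mono_le (Nat.zero_le n) hMy
    · rintro x ⟨hxE, -⟩ i
      exact hpos x hxE i
    · have hthk := Stmt3Aux.thick_final_T (Z := Z₁) n hn le_rfl hM
      have hje : (⟨n - n, by omega⟩ : Fin n) = (0 : Fin n) := by
        apply Fin.ext; simp
      rw [hje] at hthk
      refine Stmt3Aux.thick_of_subset ?_ hthk
      rintro y ⟨hyE, -, hMy⟩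
      exact ⟨hyE, hMy⟩
    · intro j hj a hne
      obtain ⟨z, ⟨⟨hzE, hMz⟩, hagz⟩⟩ := hne
      have hj1 : 1 ≤ (j : ℕ) := hj
      have hjlt : (j : ℕ) < n := j.isLt
      have h1 : 1 ≤ n - (j : ℕ) := by omega
      have hthk := Stmt3Aux.thick_final_T (Z := Z₁) (n - (j : ℕ)) h1 (by omega) hMz
      have hje : (⟨n - (n - (j : ℕ)), by omega⟩ : Fin n) = j := by
        apply Fin.ext; simp; omega
      rw [hje] at hthk
      refine Stmt3Aux.thick_of_subset ?_ hthk
      rintro y ⟨hyE, hagy, hMy⟩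
      refine ⟨⟨hyE, hMy⟩, ?_⟩
      intro i hi
      have hilt : (i : ℕ) < n - (n - (j : ℕ)) := by
        have : (i : ℕ) < (j : ℕ) := hi
        omega
      rw [hagy i hilt, hagz i hi]
  · right
    refine ⟨{y ∈ E | Stmt3Aux.MonoF E Z₁ n y}, ?_, ?_, ?_, ?_⟩
    · rintro y ⟨hyE, hMy⟩
      have hy12 := hsub hyE
      have hnotZ1 : y ∉ Z₁ := Stmt3Aux.monoF_le (Nat.zero_le n) hMy
      rcases hy12 with h' | h'
      · exact absurd h' hnotZ1
      · exact h'
    · rintro x ⟨hxE, -⟩ i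
      exact hpos x hxE i
    · have hthk := Stmt3Aux.thick_final_F (Z := Z₁) hroot hfib n hn le_rfl hy₀E hM
      have hje : (⟨n - n, by omega⟩ : Fin n) = (0 : Fin n) := by
        apply Fin.ext; simp
      rw [hje] at hthk
      refine Stmt3Aux.thick_of_subset ?_ hthk
      rintro y ⟨hyE, -, hMy⟩
      exact ⟨hyE, hMy⟩
    · intro j hj a hne
      obtain ⟨z, ⟨⟨hzE, hMz⟩, hagz⟩⟩ := hne
      have hj1 : 1 ≤ (j : ℕ) := hj
      have hjlt : (j : ℕ) < n := j.isLt
      have h1 : 1 ≤ n - (j : ℕ) := by omega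
      have hthk := Stmt3Aux.thick_final_F (Z := Z₁) hroot hfib (n - (j : ℕ)) h1 (by omega)
        hzE hMz
      have hje : (⟨n - (n - (j : ℕ)), by omega⟩ : Fin n) = j := by
        apply Fin.ext; simp; omega
      rw [hje] at hthk
      refine Stmt3Aux.thick_of_subset ?_ hthk
      rintro y ⟨hyE, hagy, hMy⟩
      refine ⟨⟨hyE, hMy⟩, ?_⟩
      intro i hi
      have hilt : (i : ℕ) < n - (n - (j : ℕ)) := by
        have : (i : ℕ) < (j : ℕ) := hi
        omega
      rw [hagy i hilt, hagz i hi]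
end

section
/- With condition (I) as defined via fibers and thickness (a set E ⊆ ℕ₀ⁿ satisfies condition (I) if it contains Ê ⊆ (ℕ₊)ⁿ with ∑_{k ∈ π₁(Ê)} 1/k = ∞ and all nonempty fibers Ê(a₁,…,a_j), 1 ≤ j < n, thick): if Z₁, …, Z_m ⊆ ℕ₀ⁿ and ⋃_{j=1}^m Z_j satisfies condition (I), then some Z_j satisfies condition (I). -/
open scoped ENNReal

section Aux

variable {n m : ℕ} [NeZero n]

/-- Pruned-color goodness, by downward recursion on depth: `good Z E j c a` means the
fiber of `E` at the prefix of `a` of length `n - c`, pruned to color `j`, is "good". -/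
def good (Z : Fin m → Set (Fin n → ℕ)) (E : Set (Fin n → ℕ)) (j : Fin m) :
    ℕ → (Fin n → ℕ) → Prop
  | 0, a => a ∈ E ∧ a ∈ Z j
  | c+1, a =>
      ∑' k : {k : ℕ | 0 < k ∧ good Z E j c
        (Function.update a ⟨n - (c+1), Nat.sub_lt (NeZero.pos n) (Nat.succ_pos c)⟩ k)},
        (1 : ℝ≥0∞) / ((k : ℕ) : ℝ≥0∞) = ⊤

variable {Z : Fin m → Set (Fin n → ℕ)} {E : Set (Fin n → ℕ)} {j : Fin m}

/-- `good` depends only on the first `n - c` coordinates. -/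
lemma good_congr : ∀ (c : ℕ) {x y : Fin n → ℕ},
    (∀ i : Fin n, (i : ℕ) < n - c → x i = y i) → (good Z E j c x ↔ good Z E j c y)
  | 0, x, y, h => by
      have hxy : x = y := funext fun i => h i (by simp [i.isLt])
      rw [hxy]
  | c+1, x, y, h => by
      simp only [good]
      have hset : {k : ℕ | 0 < k ∧ good Z E j c
            (Function.update x ⟨n - (c+1), Nat.sub_lt (NeZero.pos n) (Nat.succ_pos c)⟩ k)}
          = {k : ℕ | 0 < k ∧ good Z E j c
            (Function.update y ⟨n - (c+1), Nat.sub_lt (NeZero.pos n) (Nat.succ_pos c)⟩ k)} := by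
        ext k
        simp only [Set.mem_setOf_eq, and_congr_right_iff]
        intro _
        refine good_congr c (fun i hi => ?_)
        rcases eq_or_ne i ⟨n - (c+1), Nat.sub_lt (NeZero.pos n) (Nat.succ_pos c)⟩ with rfl | hne
        · simp [Function.update_self]
        · rw [Function.update_of_ne hne, Function.update_of_ne hne]
          refine h i ?_
          have hiv : (i : ℕ) ≠ n - (c+1) := fun hv => hne (Fin.ext hv)
          omega
      rw [hset]

/-- Every extendable prefix has some good color. -/
lemma good_exists (hcov : E ⊆ ⋃ j, Z j) (h0 : ThickAt E 0)
    (hfib : ∀ jj : Fin n, 0 < jj → ∀ a : Fin n → ℕ,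
      (fiberSet E jj a).Nonempty → ThickAt (fiberSet E jj a) jj) :
    ∀ c : ℕ, c ≤ n → ∀ x ∈ E, ∃ j : Fin m, good Z E j c x := by
  intro c
  induction c with
  | zero =>
      intro _ x hx
      rcases Set.mem_iUnion.mp (hcov hx) with ⟨j, hj⟩
      exact ⟨j, hx, hj⟩
  | succ c ih =>
      intro hcn x hx
      set d : ℕ := n - (c+1) with hd
      set dF : Fin n := ⟨d, Nat.sub_lt (NeZero.pos n) (Nat.succ_pos c)⟩ with hdF
      -- the fiber of E at x (depth d) is thick at coordinate d
      have hthick : ThickAt (fiberSet E dF x) dF := by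
        rcases Nat.eq_zero_or_pos d with hd0 | hdpos
        · have h0F : dF = 0 := Fin.ext (by simp [hdF, hd0])
          have hfe : fiberSet E dF x = E := by
            ext y
            simp only [fiberSet, Set.mem_setOf_eq, and_iff_left_iff_imp]
            intro _ i hi
            have hlt := Fin.lt_def.mp hi
            rw [h0F] at hi
            simp [Fin.lt_def] at hi
          rw [hfe, h0F]; exact h0
        · have hpos' : (0 : Fin n) < dF := by
            have h0v : ((0 : Fin n) : ℕ) = 0 := by simp
            rw [Fin.lt_def, h0v]; exact hdpos
          exact hfib dF hpos' x ⟨x, hx, fun i _ => rfl⟩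
      -- cover the thick set by the color classes
      set K : Fin m → Set ℕ := fun j =>
        {k : ℕ | 0 < k ∧ good Z E j c (Function.update x dF k)} with hK
      have hsub : {k : ℕ | 0 < k ∧ ∃ y ∈ fiberSet E dF x, y dF = k} ⊆ ⋃ j, K j := by
        rintro k ⟨hk0, y, ⟨hyE, hya⟩, hyk⟩
        rcases ih (le_of_lt (Nat.lt_of_succ_le hcn)) y hyE with ⟨j, hgood⟩
        refine Set.mem_iUnion.mpr ⟨j, hk0, ?_⟩
        refine (good_congr c (fun i hi => ?_)).mp hgood
        rcases eq_or_ne i dF with rfl | hne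
        · rw [hyk, Function.update_self]
        · have hiv : (i : ℕ) ≠ d := fun hv => hne (Fin.ext hv)
          have hid : (i : ℕ) < d := by omega
          rw [Function.update_of_ne hne]
          exact hya i (Fin.lt_def.mpr hid)
      by_contra hnone
      push_neg at hnone
      have hfin : ∀ j, ∑' k : K j, (1 : ℝ≥0∞) / ((k : ℕ) : ℝ≥0∞) < ⊤ := by
        intro j
        exact lt_top_iff_ne_top.mpr (hnone j)
      have hle : (⊤ : ℝ≥0∞) ≤ ∑ j : Fin m, ∑' k : K j, (1 : ℝ≥0∞) / ((k : ℕ) : ℝ≥0∞) := by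
        calc (⊤ : ℝ≥0∞)
            = ∑' k : {k : ℕ | 0 < k ∧ ∃ y ∈ fiberSet E dF x, y dF = k},
                (1 : ℝ≥0∞) / ((k : ℕ) : ℝ≥0∞) := hthick.symm
          _ ≤ ∑' k : ⋃ j, K j, (1 : ℝ≥0∞) / ((k : ℕ) : ℝ≥0∞) :=
              ENNReal.tsum_mono_subtype (fun k : ℕ => (1 : ℝ≥0∞) / ((k : ℕ) : ℝ≥0∞)) hsub
          _ ≤ ∑ j : Fin m, ∑' k : K j, (1 : ℝ≥0∞) / ((k : ℕ) : ℝ≥0∞) :=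
              ENNReal.tsum_iUnion_le (fun k : ℕ => (1 : ℝ≥0∞) / ((k : ℕ) : ℝ≥0∞)) K
      exact absurd (top_le_iff.mp hle)
        (ENNReal.sum_lt_top.mpr fun j _ => hfin j).ne

/-- A good prefix extends to a full point good at all smaller depths. -/
lemma good_extend : ∀ (c : ℕ) (x : Fin n → ℕ), good Z E j c x →
    ∃ y : Fin n → ℕ, (∀ i : Fin n, (i : ℕ) < n - c → y i = x i) ∧
      ∀ c' ≤ c, good Z E j c' y
  | 0, x, hg => ⟨x, fun _ _ => rfl, fun c' hc' => by
      interval_cases c'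
      exact hg⟩
  | c+1, x, hg => by
      have hg' := hg
      simp only [good] at hg'
      set dF : Fin n := ⟨n - (c+1), Nat.sub_lt (NeZero.pos n) (Nat.succ_pos c)⟩ with hdF
      have hne : {k : ℕ | 0 < k ∧ good Z E j c (Function.update x dF k)}.Nonempty := by
        by_contra hemp
        rw [Set.not_nonempty_iff_eq_empty] at hemp
        rw [hemp, tsum_empty] at hg'
        exact ENNReal.zero_ne_top hg'
      rcases hne with ⟨k, hk0, hgk⟩
      rcases good_extend c (Function.update x dF k) hgk with ⟨y, hagree, hall⟩
      refine ⟨y, fun i hi => ?_, fun c' hc' => ?_⟩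
      · have hiv : (i : ℕ) ≠ n - (c+1) := by omega
        have hne' : i ≠ dF := fun hv => hiv (by rw [hv])
        have h1 : y i = Function.update x dF k i := hagree i (by omega)
        rw [h1, Function.update_of_ne hne']
      · rcases Nat.lt_or_ge c' (c+1) with hlt | hge
        · exact hall c' (Nat.lt_succ_iff.mp hlt)
        · have hc'' : c' = c + 1 := le_antisymm hc' hge
          subst hc''
          refine (good_congr (c+1) (fun i hi => ?_)).mpr hg
          have hiv : (i : ℕ) ≠ n - (c+1) := by omega
          have hne' : i ≠ dF := fun hv => hiv (by rw [hv])
          have h1 : y i = Function.update x dF k i := hagree i (by omega)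
          rw [h1, Function.update_of_ne hne']

end Aux

/-- If a finite union `⋃ j, Z j` satisfies condition (I), then some `Z j`
satisfies condition (I). -/
theorem stmt_4 {n m : ℕ} [NeZero n] (hm : 0 < m) (Z : Fin m → Set (Fin n → ℕ))
    (h : CondI (⋃ j, Z j)) : ∃ j, CondI (Z j) := by
  obtain ⟨Ehat, hsub, hpos, h0, hfib⟩ := h
  -- Ehat is nonempty
  have hEne : Ehat.Nonempty := by
    by_contra hemp
    rw [Set.not_nonempty_iff_eq_empty] at hemp
    have : {k : ℕ | 0 < k ∧ ∃ x ∈ Ehat, x (0 : Fin n) = k} = ∅ := by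
      subst hemp; ext k; simp
    rw [ThickAt, this, tsum_empty] at h0
    exact ENNReal.zero_ne_top h0
  obtain ⟨x₀, hx₀⟩ := hEne
  obtain ⟨j, hj⟩ := good_exists hsub h0 hfib n le_rfl x₀ hx₀
  -- `good n` is independent of the point
  have hroot : ∀ x : Fin n → ℕ, good Z Ehat j n x :=
    fun x => (good_congr n (fun i hi => absurd hi (by omega))).mp hj
  refine ⟨j, {x | ∀ c ≤ n, good Z Ehat j c x}, ?_, ?_, ?_, ?_⟩
  · intro x hx
    exact (hx 0 (Nat.zero_le n)).2
  · intro x hx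
    exact hpos x (hx 0 (Nat.zero_le n)).1
  · -- thickness at coordinate 0
    have hn1 : n - 1 + 1 = n := Nat.succ_pred_eq_of_pos (NeZero.pos n)
    have hg : good Z Ehat j (n - 1 + 1) x₀ := by rw [hn1]; exact hroot x₀
    set dF : Fin n := ⟨n - (n - 1 + 1), Nat.sub_lt (NeZero.pos n) (Nat.succ_pos (n-1))⟩ with hdF
    have hdF0 : dF = (0 : Fin n) := by
      apply Fin.ext; simp [hdF, hn1]
    have hKsub : {k : ℕ | 0 < k ∧ good Z Ehat j (n-1) (Function.update x₀ dF k)}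
        ⊆ {k : ℕ | 0 < k ∧ ∃ x ∈ {x | ∀ c ≤ n, good Z Ehat j c x}, x (0 : Fin n) = k} := by
      rintro k ⟨hk0, hgk⟩
      obtain ⟨y, hagree, hall⟩ := good_extend (n-1) _ hgk
      refine ⟨hk0, y, ?_, ?_⟩
      · intro c hc
        rcases Nat.lt_or_ge c n with hlt | hge
        · exact hall c (by omega)
        · have : c = n := le_antisymm hc hge
          subst this; exact hroot y
      · have h1 : y dF = Function.update x₀ dF k dF := by
          refine hagree dF ?_
          simp only [hdF]
          omega
        rw [← hdF0, h1, Function.update_self]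
    have hle : (⊤ : ℝ≥0∞) ≤ ∑' k : {k : ℕ | 0 < k ∧ ∃ x ∈ {x | ∀ c ≤ n, good Z Ehat j c x},
        x (0 : Fin n) = k}, (1 : ℝ≥0∞) / ((k : ℕ) : ℝ≥0∞) := by
      calc (⊤ : ℝ≥0∞)
          = ∑' k : {k : ℕ | 0 < k ∧ good Z Ehat j (n-1) (Function.update x₀ dF k)},
              (1 : ℝ≥0∞) / ((k : ℕ) : ℝ≥0∞) := by
            have := hg
            simp only [good] at this
            exact this.symm
        _ ≤ _ := ENNReal.tsum_mono_subtype (fun k : ℕ => (1 : ℝ≥0∞) / ((k : ℕ) : ℝ≥0∞)) hKsub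
    exact top_le_iff.mp hle
  · -- fibers
    intro jj hjj a ⟨x₀', hx₀E', hx₀a⟩
    set d : ℕ := (jj : ℕ) with hdd
    have hd1 : 1 ≤ d := hjj
    have hdn : d < n := jj.isLt
    set c : ℕ := n - d - 1 with hc
    have hcd : n - (c+1) = d := by omega
    have hg : good Z Ehat j (c+1) x₀' := hx₀E' (c+1) (by omega)
    set dF : Fin n := ⟨n - (c+1), Nat.sub_lt (NeZero.pos n) (Nat.succ_pos c)⟩ with hdF
    have hdFjj : dF = jj := by apply Fin.ext; simp [hdF, hcd]; exact hdd
    have hKsub : {k : ℕ | 0 < k ∧ good Z Ehat j c (Function.update x₀' dF k)}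
        ⊆ {k : ℕ | 0 < k ∧ ∃ x ∈ fiberSet {x | ∀ c ≤ n, good Z Ehat j c x} jj a, x jj = k} := by
      rintro k ⟨hk0, hgk⟩
      obtain ⟨y, hagree, hall⟩ := good_extend c _ hgk
      have hyx : ∀ i : Fin n, (i : ℕ) < d → y i = x₀' i := by
        intro i hi
        have hne' : i ≠ dF := by
          intro hv
          have : (i : ℕ) = d := by rw [hv, hdF]; omega
          omega
        have h1 : y i = Function.update x₀' dF k i := hagree i (by omega)
        rw [h1, Function.update_of_ne hne']
      have hyE' : y ∈ {x | ∀ c ≤ n, good Z Ehat j c x} := by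
        intro c' hc'
        rcases Nat.lt_or_ge c' (c+1) with hlt | hge
        · exact hall c' (by omega)
        · refine (good_congr c' (fun i hi => ?_)).mpr (hx₀E' c' hc')
          exact hyx i (by omega)
      refine ⟨hk0, y, ⟨hyE', fun i hi => ?_⟩, ?_⟩
      · rw [hyx i (Fin.lt_def.mp hi), hx₀a i hi]
      · have h1 : y dF = Function.update x₀' dF k dF := hagree dF (by simp [hdF]; omega)
        rw [← hdFjj, h1, Function.update_self]
    have hle : (⊤ : ℝ≥0∞) ≤ ∑' k : {k : ℕ | 0 < k ∧
        ∃ x ∈ fiberSet {x | ∀ c ≤ n, good Z Ehat j c x} jj a, x jj = k},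
        (1 : ℝ≥0∞) / ((k : ℕ) : ℝ≥0∞) := by
      calc (⊤ : ℝ≥0∞)
          = ∑' k : {k : ℕ | 0 < k ∧ good Z Ehat j c (Function.update x₀' dF k)},
              (1 : ℝ≥0∞) / ((k : ℕ) : ℝ≥0∞) := by
            have := hg
            simp only [good] at this
            exact this.symm
        _ ≤ _ := ENNReal.tsum_mono_subtype (fun k : ℕ => (1 : ℝ≥0∞) / ((k : ℕ) : ℝ≥0∞)) hKsub
    exact top_le_iff.mp hle
end

section
/- Let f : H₊ⁿ → ℂ be a bounded holomorphic function on the product of right half-planes H₊ⁿ = {z ∈ ℂⁿ : Re z_j > 0 for all j}. If the zero set E = {α ∈ ℕ₊ⁿ : f(α) = 0} satisfies condition (I), then f ≡ 0 on H₊ⁿ. -/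
open scoped ENNReal

set_option maxHeartbeats 1000000

private lemma le_of_forall_pos_le_add' {a b : ℝ} (h : ∀ ε : ℝ, 0 < ε → a ≤ b + ε) : a ≤ b := by
  by_contra hc
  have := h ((a - b) / 2) (by linarith)
  linarith

private lemma norm_eq_sqrt_normSq (w : ℂ) : ‖w‖ = Real.sqrt (Complex.normSq w) := by
  rw [Complex.norm_def]

/-- Division by a Blaschke-type factor on the right half-plane. -/
private lemma div_lemma (f : ℂ → ℂ) (C : ℝ) (hC : 0 ≤ C)
    (hd : DifferentiableOn ℂ f {z : ℂ | 0 < z.re})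
    (hb : ∀ z : ℂ, 0 < z.re → ‖f z‖ ≤ C) (a : ℝ) (ha : 0 < a) (hfa : f a = 0) :
    ∃ g : ℂ → ℂ, DifferentiableOn ℂ g {z : ℂ | 0 < z.re} ∧
      (∀ z : ℂ, 0 < z.re → ‖g z‖ ≤ C) ∧
      ∀ z : ℂ, 0 < z.re → f z = (z - a) / (z + a) * g z := by
  classical
  have hop : IsOpen {z : ℂ | 0 < z.re} := isOpen_lt continuous_const Complex.continuous_re
  have hare : ((a : ℂ)).re = a := by simp
  have hmem : (a : ℂ) ∈ {z : ℂ | 0 < z.re} := by simpa using ha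
  set g : ℂ → ℂ := fun z => dslope f (a : ℂ) z * (z + a) with hg
  have hgd : DifferentiableOn ℂ g {z : ℂ | 0 < z.re} := by
    have h1 : DifferentiableOn ℂ (dslope f (a : ℂ)) {z : ℂ | 0 < z.re} :=
      (Complex.differentiableOn_dslope (hop.mem_nhds hmem)).mpr hd
    exact h1.mul (differentiableOn_id.add_const _)
  have hkey : ∀ z : ℂ, g z * (z - a) = f z * (z + a) := by
    intro z
    have h := sub_smul_dslope f (a : ℂ) z
    rw [smul_eq_mul, hfa, sub_zero] at h
    calc g z * (z - a) = ((z - a) * dslope f (a:ℂ) z) * (z + a) := by ring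
    _ = f z * (z + a) := by rw [h]
  have hgb : ∀ z : ℂ, 0 < z.re → ‖g z‖ ≤ C := by
    intro z0 hz0
    apply le_of_forall_pos_le_add'
    intro ε hε
    set δ : ℝ := ε / (C + 1) with hδ
    have hδ0 : 0 < δ := div_pos hε (by linarith)
    set e : ℝ := min (a / 2) (min (z0.re / 2) (δ * a / 16)) with he
    have he0 : 0 < e := by
      refine lt_min (by linarith) (lt_min (by linarith) ?_)
      positivity
    have hea : e ≤ a / 2 := min_le_left _ _
    have hez : e ≤ z0.re / 2 := (min_le_right _ _).trans (min_le_left _ _)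
    have heδ : 16 * e ≤ δ * a := by
      have h := (min_le_right (a/2) _).trans (min_le_right (z0.re/2) (δ * a / 16))
      linarith
    set R : ℝ := max (2 * a) (max (16 * a / δ) (‖z0‖ + 1)) with hR
    have hR2a : 2 * a ≤ R := le_max_left _ _
    have hRδ : 16 * a / δ ≤ R := (le_max_left _ _).trans (le_max_right _ _)
    have hRz : ‖z0‖ + 1 ≤ R := (le_max_right _ _).trans (le_max_right _ _)
    have hR0 : 0 < R := lt_of_lt_of_le (by linarith) hR2a
    have hRδ' : 16 * a ≤ δ * R := by
      rw [div_le_iff₀ hδ0] at hRδ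
      linarith
    set U : Set ℂ := {z : ℂ | e < z.re ∧ ‖z‖ < R} with hU
    have hUopen : IsOpen U :=
      (isOpen_lt continuous_const Complex.continuous_re).inter
        (isOpen_lt continuous_norm continuous_const)
    have hUb : Bornology.IsBounded U :=
      (Metric.isBounded_ball (x := (0:ℂ)) (r := R)).subset
        (fun z hz => by simpa [Metric.mem_ball, Complex.dist_eq] using hz.2)
    set K : Set ℂ := {z : ℂ | e ≤ z.re ∧ ‖z‖ ≤ R} with hK
    have hKcl : IsClosed K :=
      (isClosed_le continuous_const Complex.continuous_re).inter
        (isClosed_le continuous_norm continuous_const)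
    have hUK : closure U ⊆ K :=
      closure_minimal (fun z hz => ⟨hz.1.le, hz.2.le⟩) hKcl
    have hKhp : K ⊆ {z : ℂ | 0 < z.re} := fun z hz => lt_of_lt_of_le he0 hz.1
    have hfr : ∀ z ∈ frontier U, ‖g z‖ ≤ C * (1 + δ) := by
      intro z hz
      rw [hUopen.frontier_eq] at hz
      have hzK : z ∈ K := hUK hz.1
      have hznU : z ∉ U := hz.2
      have hcase : z.re = e ∨ ‖z‖ = R := by
        by_contra hcon
        push_neg at hcon
        exact hznU ⟨lt_of_le_of_ne hzK.1 (Ne.symm hcon.1), lt_of_le_of_ne hzK.2 hcon.2⟩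
      have hzre : 0 < z.re := lt_of_lt_of_le he0 hzK.1
      have hnum : Complex.normSq (z + a) ≤ (1 + δ) * Complex.normSq (z - a) := by
        have hre1 : (z + (a:ℂ)).re = z.re + a := by simp
        have hre2 : (z - (a:ℂ)).re = z.re - a := by simp
        have him1 : (z + (a:ℂ)).im = z.im := by simp
        have him2 : (z - (a:ℂ)).im = z.im := by simp
        rw [Complex.normSq_apply, Complex.normSq_apply, hre1, hre2, him1, him2]
        rcases hcase with hcase | hcase
        · rw [hcase]
          have h1 : δ * (a * a / 4) ≤ δ * ((a - e) * (a - e)) := by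
            have : a * a / 4 ≤ (a - e) * (a - e) := by nlinarith
            exact mul_le_mul_of_nonneg_left this hδ0.le
          have h2 : 16 * e * a ≤ δ * a * a := by nlinarith
          nlinarith [mul_nonneg hδ0.le (mul_self_nonneg z.im)]
        · have hsq : z.re * z.re + z.im * z.im = R * R := by
            have h := norm_eq_sqrt_normSq z
            rw [hcase] at h
            have h2 : R * R = Complex.normSq z := by
              have := Real.sq_sqrt (Complex.normSq_nonneg z)
              nlinarith [this, h.symm, Real.sqrt_nonneg (Complex.normSq z)]
            rw [Complex.normSq_apply] at h2
            linarith
          have hxR : z.re ≤ R := by nlinarith [mul_self_nonneg z.im]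
          have hA : R * R - 2 * a * z.re + a * a ≥ (R - a) * (R - a) := by nlinarith
          have hB : (R - a) * (R - a) ≥ (R / 2) * (R / 2) := by nlinarith
          have hD : δ * (R * R) ≥ 16 * a * R :=
            (mul_le_mul_of_nonneg_right hRδ' hR0.le).trans_eq (by ring)
          nlinarith [mul_nonneg hδ0.le (mul_self_nonneg (z.re - a)),
            mul_nonneg hδ0.le (mul_self_nonneg z.im)]
      have hzna : z ≠ (a : ℂ) := by
        rcases hcase with hcase | hcase
        · intro h; rw [h, hare] at hcase; linarith
        · intro h; rw [h] at hcase
          have hn : ‖(a:ℂ)‖ = a := by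
            rw [Complex.norm_real, Real.norm_eq_abs, abs_of_pos ha]
          rw [hn] at hcase; linarith
      have habs : ‖z + (a:ℂ)‖ ≤ (1 + δ) * ‖z - (a:ℂ)‖ := by
        rw [norm_eq_sqrt_normSq, norm_eq_sqrt_normSq]
        have h2 : Complex.normSq (z + a) ≤ (1 + δ)^2 * Complex.normSq (z - a) := by
          nlinarith [hnum, mul_nonneg (mul_nonneg hδ0.le (by linarith : (0:ℝ) ≤ 1 + δ))
            (Complex.normSq_nonneg (z - (a:ℂ)))]
        calc Real.sqrt (Complex.normSq (z + a))
            ≤ Real.sqrt ((1 + δ)^2 * Complex.normSq (z - a)) := Real.sqrt_le_sqrt h2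
          _ = (1 + δ) * Real.sqrt (Complex.normSq (z - a)) := by
            rw [Real.sqrt_mul (by positivity), Real.sqrt_sq (by positivity)]
      have hsub0 : (0:ℝ) < ‖z - (a:ℂ)‖ := by
        simpa [norm_pos_iff, sub_ne_zero] using hzna
      have hnorm : ‖g z‖ * ‖z - (a:ℂ)‖ = ‖f z‖ * ‖z + (a:ℂ)‖ := by
        rw [← norm_mul, ← norm_mul, hkey z]
      have hfz : ‖f z‖ ≤ C := hb z hzre
      have hmul : ‖g z‖ * ‖z - (a:ℂ)‖ ≤ C * (1 + δ) * ‖z - (a:ℂ)‖ := by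
        rw [hnorm]
        calc ‖f z‖ * ‖z + (a:ℂ)‖ ≤ C * ((1 + δ) * ‖z - (a:ℂ)‖) :=
              mul_le_mul hfz habs (norm_nonneg _) hC
          _ = C * (1 + δ) * ‖z - (a:ℂ)‖ := by ring
      exact le_of_mul_le_mul_right hmul hsub0
    have hz0U : z0 ∈ U := ⟨by linarith, by linarith⟩
    have hdc : DiffContOnCl ℂ g U :=
      DifferentiableOn.diffContOnCl (hgd.mono (hUK.trans hKhp))
    have hmax := Complex.norm_le_of_forall_mem_frontier_norm_le hUb hdc hfr
      (subset_closure hz0U)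
    have hCδ : C * (1 + δ) ≤ C + ε := by
      have h1 : C * δ ≤ ε := by
        rw [hδ]
        calc C * (ε / (C + 1)) = ε * (C / (C + 1)) := by ring
          _ ≤ ε * 1 := mul_le_mul_of_nonneg_left
              ((div_le_one (by linarith)).mpr (by linarith)) hε.le
          _ = ε := mul_one ε
      linarith
    linarith
  refine ⟨g, hgd, hgb, ?_⟩
  intro z hz
  have hz2 : z + (a:ℂ) ≠ 0 := by
    intro h
    have h2 : (z + (a:ℂ)).re = 0 := by rw [h]; simp
    simp only [Complex.add_re, Complex.ofReal_re] at h2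
    linarith
  field_simp
  linear_combination -(hkey z)

private lemma finset_bound (s : Finset ℕ) :
    ∀ (f : ℂ → ℂ) (C : ℝ), 0 ≤ C → (∀ k ∈ s, 0 < k) →
    DifferentiableOn ℂ f {z : ℂ | 0 < z.re} →
    (∀ z : ℂ, 0 < z.re → ‖f z‖ ≤ C) → (∀ k ∈ s, f (k : ℂ) = 0) →
    ∀ z : ℂ, 0 < z.re → ‖f z‖ ≤ C * ∏ k ∈ s, ‖(z - (k:ℕ)) / (z + (k:ℕ))‖ := by
  classical
  induction s using Finset.induction_on with
  | empty => intro f C hC _ _ hb _ z hz; simpa using hb z hz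
  | @insert a s hans ih =>
    intro f C hC hpos hd hb hzero z hz
    have ha : 0 < (a:ℝ) := by exact_mod_cast hpos a (Finset.mem_insert_self a s)
    obtain ⟨g, hgd, hgb, hfg⟩ := div_lemma f C hC hd hb a ha
      (by exact_mod_cast hzero a (Finset.mem_insert_self a s))
    have hgz : ∀ k ∈ s, g (k : ℂ) = 0 := by
      intro k hk
      have hkpos : 0 < k := hpos k (Finset.mem_insert_of_mem hk)
      have hkre : (0:ℝ) < ((k:ℂ)).re := by simpa using (by exact_mod_cast hkpos : (0:ℝ) < k)
      have h0 : f (k:ℂ) = 0 := hzero k (Finset.mem_insert_of_mem hk)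
      have h1 := hfg (k:ℂ) hkre
      rw [h0] at h1
      have hka : k ≠ a := by rintro rfl; exact hans hk
      have hnz : ((k:ℂ) - (a:ℕ)) / ((k:ℂ) + (a:ℕ)) ≠ 0 := by
        apply div_ne_zero
        · intro h
          have : ((k:ℂ)) = ((a:ℕ):ℂ) := by linear_combination h
          exact hka (by exact_mod_cast this)
        · intro h
          have h2 : (((k:ℂ) + (a:ℕ))).re = 0 := by rw [h]; simp
          simp only [Complex.add_re, Complex.natCast_re] at h2
          have : (0:ℝ) < (k:ℝ) + (a:ℝ) := by positivity
          linarith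
      have := (mul_eq_zero.mp h1.symm).resolve_left hnz
      exact this
    have hgbound := ih g C hC (fun k hk => hpos k (Finset.mem_insert_of_mem hk))
      hgd hgb hgz z hz
    rw [hfg z hz, Finset.prod_insert hans, norm_mul]
    calc ‖(z - (a:ℕ)) / (z + (a:ℕ))‖ * ‖g z‖
        ≤ ‖(z - (a:ℕ)) / (z + (a:ℕ))‖ * (C * ∏ k ∈ s, ‖(z - (k:ℕ)) / (z + (k:ℕ))‖) :=
          mul_le_mul_of_nonneg_left hgbound (norm_nonneg _)
      _ = C * (‖(z - (a:ℕ)) / (z + (a:ℕ))‖ * ∏ k ∈ s, ‖(z - (k:ℕ)) / (z + (k:ℕ))‖) := by ring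

private lemma one_dim (f : ℂ → ℂ) (C : ℝ) (hC : 0 ≤ C)
    (hd : DifferentiableOn ℂ f {z : ℂ | 0 < z.re})
    (hb : ∀ z : ℂ, 0 < z.re → ‖f z‖ ≤ C) (S : Set ℕ) (hSpos : ∀ k ∈ S, 0 < k)
    (hthick : (∑' k : S, (1 : ℝ≥0∞) / ((k : ℕ) : ℝ≥0∞)) = ⊤)
    (hz : ∀ k ∈ S, f (k : ℂ) = 0) :
    ∀ z : ℂ, 0 < z.re → f z = 0 := by
  classical
  intro z hzre
  rw [← norm_eq_zero]
  have hmain : ∀ ε : ℝ, 0 < ε → ‖f z‖ ≤ 0 + ε := by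
    intro ε hε
    rw [zero_add]
    set c : ℝ := 2 * z.re / (1 + ‖z‖)^2 with hc
    have hden0 : (0:ℝ) < (1 + ‖z‖)^2 := by positivity
    have hc0 : 0 < c := by positivity
    have hc1 : c ≤ 1 := by
      rw [hc, div_le_one hden0]
      have h1 : z.re ≤ ‖z‖ := Complex.re_le_norm z
      nlinarith [norm_nonneg z, sq_nonneg (1 - ‖z‖)]
    set M : ℝ := max 0 (c⁻¹ * Real.log ((C + 1) / ε)) with hM
    have hM0 : 0 ≤ M := le_max_left _ _
    have hexp : C * Real.exp (-(c * M)) ≤ ε := by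
      have hlog : Real.log ((C + 1) / ε) ≤ c * M := by
        rcases le_or_gt (Real.log ((C + 1) / ε)) 0 with h | h
        · exact h.trans (by positivity)
        · have h2 : c⁻¹ * Real.log ((C + 1) / ε) ≤ M := le_max_right _ _
          calc Real.log ((C + 1) / ε) = c * (c⁻¹ * Real.log ((C + 1) / ε)) := by
                field_simp
            _ ≤ c * M := mul_le_mul_of_nonneg_left h2 hc0.le
      have h1 : Real.exp (-(c * M)) ≤ Real.exp (-(Real.log ((C + 1) / ε))) :=
        Real.exp_le_exp.mpr (by linarith)
      have h2 : Real.exp (-(Real.log ((C + 1) / ε))) = ε / (C + 1) := by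
        rw [Real.exp_neg, Real.exp_log (by positivity), inv_div]
      calc C * Real.exp (-(c * M)) ≤ C * (ε / (C + 1)) := by
            rw [← h2]; exact mul_le_mul_of_nonneg_left h1 hC
        _ = ε * (C / (C + 1)) := by ring
        _ ≤ ε * 1 := mul_le_mul_of_nonneg_left
            ((div_le_one (by linarith)).mpr (by linarith)) hε.le
        _ = ε := mul_one ε
    obtain ⟨s, hsS, hsum⟩ : ∃ s : Finset ℕ, (∀ k ∈ s, k ∈ S) ∧
        M ≤ ∑ k ∈ s, 1 / (k : ℝ) := by
      have h1 : (ENNReal.ofReal M) < ∑' k : S, (1 : ℝ≥0∞) / ((k : ℕ) : ℝ≥0∞) := by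
        rw [hthick]; exact ENNReal.ofReal_lt_top
      rw [ENNReal.tsum_eq_iSup_sum, lt_iSup_iff] at h1
      obtain ⟨t, ht⟩ := h1
      refine ⟨t.image Subtype.val, ?_, ?_⟩
      · intro k hk
        obtain ⟨x, -, rfl⟩ := Finset.mem_image.mp hk
        exact x.2
      · have hsum2 : ∑ k ∈ t.image Subtype.val, (1:ℝ≥0∞) / (k : ℝ≥0∞)
            = ∑ x ∈ t, (1:ℝ≥0∞) / ((x : ℕ) : ℝ≥0∞) :=
          Finset.sum_image (fun x _ y _ h => Subtype.ext h)
        set s := t.image Subtype.val with hs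
        have hspos : ∀ k ∈ s, 0 < k := by
          intro k hk
          obtain ⟨x, -, rfl⟩ := Finset.mem_image.mp hk
          exact hSpos _ x.2
        have hofreal : ∑ k ∈ s, (1:ℝ≥0∞) / (k : ℝ≥0∞)
            = ENNReal.ofReal (∑ k ∈ s, 1 / (k : ℝ)) := by
          rw [ENNReal.ofReal_sum_of_nonneg (fun k _ => by positivity)]
          refine Finset.sum_congr rfl (fun k hk => ?_)
          have hk0 : 0 < k := hspos k hk
          rw [one_div, one_div, ENNReal.ofReal_inv_of_pos (by exact_mod_cast hk0),
            ENNReal.ofReal_natCast]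
        have hlt : ENNReal.ofReal M < ENNReal.ofReal (∑ k ∈ s, 1 / (k : ℝ)) := by
          rw [← hofreal, hs, hsum2]; exact ht
        exact ((ENNReal.ofReal_lt_ofReal_iff_of_nonneg hM0).mp hlt).le
    have hspos : ∀ k ∈ s, 0 < k := fun k hk => hSpos k (hsS k hk)
    have hbound := finset_bound s f C hC hspos hd hb (fun k hk => hz k (hsS k hk)) z hzre
    have hfac : ∀ k ∈ s, ‖(z - (k:ℕ)) / (z + (k:ℕ))‖ ≤ Real.exp (-(c / (k:ℝ))) := by
      intro k hk
      have hk0 : 0 < k := hspos k hk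
      have hk1 : (1:ℝ) ≤ (k:ℝ) := by exact_mod_cast hk0
      have hzkre : ((z + ((k:ℕ):ℂ))).re = z.re + (k:ℝ) := by simp
      have hdenne : (z + ((k:ℕ):ℂ)) ≠ 0 := by
        intro h; rw [h] at hzkre; simp only [Complex.zero_re] at hzkre; linarith
      set A := ‖z - ((k:ℕ):ℂ)‖ with hA
      set B := ‖z + ((k:ℕ):ℂ)‖ with hB
      have hB0 : 0 < B := norm_pos_iff.mpr hdenne
      have hA0 : 0 ≤ A := norm_nonneg _
      have hA2 : A ^ 2 = (z.re - (k:ℝ)) ^ 2 + z.im ^ 2 := by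
        rw [hA, Complex.sq_norm, Complex.normSq_apply]
        simp only [Complex.sub_re, Complex.sub_im, Complex.natCast_re, Complex.natCast_im]
        ring
      have hB2 : B ^ 2 = (z.re + (k:ℝ)) ^ 2 + z.im ^ 2 := by
        rw [hB, Complex.sq_norm, Complex.normSq_apply]
        simp only [Complex.add_re, Complex.add_im, Complex.natCast_re, Complex.natCast_im]
        ring
      have hBA : B ^ 2 = A ^ 2 + 4 * (k:ℝ) * z.re := by rw [hA2, hB2]; ring
      have hBle : B ≤ (k:ℝ) * (1 + ‖z‖) := by
        have h1 : B ≤ ‖z‖ + ‖((k:ℕ):ℂ)‖ := norm_add_le _ _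
        have h2 : ‖((k:ℕ):ℂ)‖ = (k:ℝ) := by
          simp
        rw [h2] at h1
        nlinarith [norm_nonneg z]
      have hB2le : B ^ 2 ≤ ((k:ℝ) * (1 + ‖z‖)) ^ 2 := by nlinarith [hB0.le]
      have hck : c / (k:ℝ) ≤ 1 := by
        calc c / (k:ℝ) ≤ c / 1 := by
              apply div_le_div_of_nonneg_left hc0.le (by norm_num) hk1
          _ = c := div_one c
          _ ≤ 1 := hc1
      have hck0 : 0 < c / (k:ℝ) := by positivity
      have hck2 : (c / (k:ℝ)) * ((k:ℝ) * (1 + ‖z‖)) ^ 2 = 2 * z.re * (k:ℝ) := by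
        rw [hc]
        field_simp
      have hmono : (c / (k:ℝ)) * B ^ 2 ≤ (c / (k:ℝ)) * ((k:ℝ) * (1 + ‖z‖)) ^ 2 :=
        mul_le_mul_of_nonneg_left hB2le hck0.le
      have hA2' : A ^ 2 ≤ ((1 - c / (k:ℝ)) * B) ^ 2 := by
        nlinarith [hBA, hmono, hck2, sq_nonneg ((c / (k:ℝ)) * B)]
      have hAle : A ≤ (1 - c / (k:ℝ)) * B := by
        have h1 : A = Real.sqrt (A ^ 2) := (Real.sqrt_sq hA0).symm
        rw [h1]
        calc Real.sqrt (A ^ 2) ≤ Real.sqrt (((1 - c / (k:ℝ)) * B) ^ 2) :=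
              Real.sqrt_le_sqrt hA2'
          _ = (1 - c / (k:ℝ)) * B := Real.sqrt_sq (by nlinarith)
      have hdiv : ‖(z - (k:ℕ)) / (z + (k:ℕ))‖ = A / B := by
        rw [norm_div]
      rw [hdiv]
      have h1 : A / B ≤ 1 - c / (k:ℝ) := (div_le_iff₀ hB0).mpr (by linarith [hAle])
      have h2 : 1 - c / (k:ℝ) ≤ Real.exp (-(c / (k:ℝ))) := by
        have := Real.add_one_le_exp (-(c / (k:ℝ)))
        linarith
      linarith
    have hprod : (∏ k ∈ s, ‖(z - (k:ℕ)) / (z + (k:ℕ))‖) ≤ Real.exp (-(c * M)) := by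
      calc (∏ k ∈ s, ‖(z - (k:ℕ)) / (z + (k:ℕ))‖)
          ≤ ∏ k ∈ s, Real.exp (-(c / (k:ℝ))) :=
            Finset.prod_le_prod (fun k _ => norm_nonneg _) hfac
        _ = Real.exp (∑ k ∈ s, -(c / (k:ℝ))) := (Real.exp_sum s _).symm
        _ ≤ Real.exp (-(c * M)) := by
            apply Real.exp_le_exp.mpr
            have h1 : ∑ k ∈ s, -(c / (k:ℝ)) = -(c * ∑ k ∈ s, 1 / (k:ℝ)) := by
              rw [Finset.mul_sum, ← Finset.sum_neg_distrib]
              refine Finset.sum_congr rfl (fun k _ => ?_)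
              rw [mul_one_div]
            rw [h1]
            have h2 : c * M ≤ c * ∑ k ∈ s, 1 / (k:ℝ) :=
              mul_le_mul_of_nonneg_left hsum hc0.le
            linarith
    calc ‖f z‖ ≤ C * ∏ k ∈ s, ‖(z - (k:ℕ)) / (z + (k:ℕ))‖ := hbound
      _ ≤ C * Real.exp (-(c * M)) := mul_le_mul_of_nonneg_left hprod hC
      _ ≤ ε := hexp
  have hle := le_of_forall_pos_le_add' hmain
  have h0 := norm_nonneg (f z)
  linarith

/-- A bounded holomorphic function on the product of right half-planes whose zero set
on positive integer multi-indices satisfies condition (I) vanishes identically. -/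
theorem stmt_6 {n : ℕ} [NeZero n] (f : (Fin n → ℂ) → ℂ)
    (hdiff : DifferentiableOn ℂ f {z : Fin n → ℂ | ∀ i, 0 < (z i).re})
    (hbdd : ∃ C : ℝ, ∀ z ∈ {z : Fin n → ℂ | ∀ i, 0 < (z i).re}, ‖f z‖ ≤ C)
    (hE : CondI {α : Fin n → ℕ | (∀ i, 0 < α i) ∧ f (fun i => (α i : ℂ)) = 0}) :
    ∀ z ∈ {z : Fin n → ℂ | ∀ i, 0 < (z i).re}, f z = 0 := by
  classical
  obtain ⟨C, hC⟩ := hbdd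
  set C0 : ℝ := max C 0 with hC0
  have hC0nn : 0 ≤ C0 := le_max_right _ _
  have hbC0 : ∀ z : Fin n → ℂ, (∀ i, 0 < (z i).re) → ‖f z‖ ≤ C0 :=
    fun z hz => (hC z hz).trans (le_max_left _ _)
  obtain ⟨Ehat, hsub, hpos, hth0, hfib⟩ := hE
  -- The update map is differentiable
  have hupd : ∀ (z : Fin n → ℂ) (j : Fin n),
      Differentiable ℂ (fun w : ℂ => Function.update z j w) := by
    intro z j
    rw [differentiable_pi]
    intro i
    by_cases h : i = j
    · subst h
      simp only [Function.update_self]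
      exact differentiable_id
    · simp only [Function.update_of_ne h]
      exact differentiable_const _
  -- Downward induction statement
  have key : ∀ m : ℕ, m ≤ n → ∀ x ∈ Ehat, ∀ z : Fin n → ℂ, (∀ i, 0 < (z i).re) →
      (∀ i : Fin n, (i : ℕ) < n - m → z i = ((x i : ℕ) : ℂ)) → f z = 0 := by
    intro m
    induction m with
    | zero =>
      intro _ x hx z hz hagree
      have hzx : z = fun i => ((x i : ℕ) : ℂ) :=
        funext fun i => hagree i (by omega)
      rw [hzx]
      exact (hsub hx).2
    | succ m ih =>
      intro hm x hx z hz hagree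
      set j : ℕ := n - (m + 1) with hj
      have hjn : j < n := by omega
      have hnm : j + 1 = n - m := by omega
      set jf : Fin n := ⟨j, hjn⟩ with hjf
      -- thickness of the fiber of x at jf
      have hth : ThickAt (fiberSet Ehat jf x) jf := by
        rcases Nat.eq_zero_or_pos j with h0 | hpos'
        · have hjf0 : jf = 0 := by
            apply Fin.ext
            simp [hjf, h0]
          have hfeq : fiberSet Ehat jf x = Ehat := by
            ext y
            simp only [fiberSet, Set.mem_setOf_eq, Set.mem_sep_iff]
            constructor
            · exact fun h => h.1
            · intro h
              refine ⟨h, fun i hi => ?_⟩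
              exfalso
              rw [hjf0, Fin.lt_def, Fin.val_zero] at hi
              exact Nat.not_lt_zero _ hi
          rw [hfeq, hjf0]
          exact hth0
        · exact hfib jf (by simpa [Fin.lt_def, hjf] using hpos') x
            ⟨x, hx, fun i _ => rfl⟩
      -- one-variable function g
      set g : ℂ → ℂ := fun w => f (Function.update z jf w) with hg
      have hmaps : ∀ w : ℂ, 0 < w.re → ∀ i, 0 < ((Function.update z jf w) i).re := by
        intro w hw i
        rcases eq_or_ne i jf with h | h
        · rw [h, Function.update_self]; exact hw
        · rw [Function.update_of_ne h]; exact hz i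
      have hgd : DifferentiableOn ℂ g {w : ℂ | 0 < w.re} := by
        apply DifferentiableOn.comp hdiff ((hupd z jf).differentiableOn)
        intro w hw
        exact hmaps w hw
      have hgb : ∀ w : ℂ, 0 < w.re → ‖g w‖ ≤ C0 := fun w hw => hbC0 _ (hmaps w hw)
      set S : Set ℕ := {k : ℕ | 0 < k ∧ ∃ y ∈ fiberSet Ehat jf x, y jf = k} with hS
      have hSpos : ∀ k ∈ S, 0 < k := fun k hk => hk.1
      have hgz : ∀ k ∈ S, g (k : ℂ) = 0 := by
        intro k hk
        obtain ⟨y, hyfib, hyk⟩ := hk.2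
        have hyE : y ∈ Ehat := hyfib.1
        apply ih (by omega) y hyE
        · intro i
          rcases eq_or_ne i jf with h | h
          · rw [h, Function.update_self]
            simpa using (by exact_mod_cast hk.1 : (0:ℝ) < (k:ℝ))
          · rw [Function.update_of_ne h]; exact hz i
        · intro i hi
          rw [← hnm] at hi
          rcases eq_or_ne i jf with h | h
          · rw [h, Function.update_self, ← hyk]
          · have hij : (i : ℕ) < j := by
              rcases Nat.lt_succ_iff_lt_or_eq.mp hi with h' | h'
              · exact h'
              · exact absurd (Fin.ext h' : i = jf) h
            rw [Function.update_of_ne h]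
            rw [hagree i (by omega)]
            have := hyfib.2 i (by simpa [Fin.lt_def, hjf] using hij)
            rw [this]
      have hgzero : ∀ w : ℂ, 0 < w.re → g w = 0 := by
        apply one_dim g C0 hC0nn hgd hgb S hSpos ?_ hgz
        exact hth
      have hzj : 0 < (z jf).re := hz jf
      have := hgzero (z jf) hzj
      rw [hg] at this
      simpa [Function.update_eq_self] using this
  -- conclude
  have hEhatne : Ehat.Nonempty := by
    rcases Set.eq_empty_or_nonempty Ehat with h | h
    · exfalso
      rw [h] at hth0
      unfold ThickAt at hth0
      have hempty : {k : ℕ | 0 < k ∧ ∃ x ∈ (∅ : Set (Fin n → ℕ)), x 0 = k} = ∅ := by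
        ext k; simp
      rw [hempty] at hth0
      simp [tsum_empty] at hth0
    · exact h
  obtain ⟨x, hx⟩ := hEhatne
  intro z hz
  exact key n le_rfl x hx z hz (fun i hi => absurd hi (by omega))
end
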